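/- arXiv:1307.0827 — 10 statements merged into one kernel-verified Lean document; each statement's English description precedes it below -/
import Mathlib

section
/- (Proposition 1.) Let n = 2 and ψ = (b₁ + b₂)/√2. For every p ∈ [0, 2/3] and every effect E on ℂ², the reliability satisfies R_ψ(E) ≤ 1 − p/2. In particular, for p ≠ 0 no experiment can determine with reliability 1 whether a collapse has occurred. -/
open scoped InnerProductSpace
open MeasureTheory Finset

noncomputable section

abbrev Vn (n : ℕ) : Type := EuclideanSpace ℂ (Fin n)

/-- The standard orthonormal basis vector `b_k` of `ℂ^n`. -/
def basisVec (n : ℕ) (k : Fin n) : Vn n := EuclideanSpace.single k 1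

/-- The rank-one operator `|w⟩⟨v|`, i.e. `x ↦ ⟪v, x⟫ • w`. -/
def rankOne {n : ℕ} (v w : Vn n) : Vn n →L[ℂ] Vn n :=
  (innerSL ℂ v).smulRight w

/-- The diagonal part `diag E = ∑ₖ ⟪bₖ, E bₖ⟫ |bₖ⟩⟨bₖ|` of an operator `E`
in the standard basis. -/
def diagOp {n : ℕ} (E : Vn n →L[ℂ] Vn n) : Vn n →L[ℂ] Vn n :=
  ∑ k : Fin n, ⟪basisVec n k, E (basisVec n k)⟫_ℂ • rankOne (basisVec n k) (basisVec n k)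

/-- An effect: an operator `E` with `0 ≤ E ≤ I`
(both `E` and `I - E` positive semidefinite). -/
def IsEffect {n : ℕ} (E : Vn n →L[ℂ] Vn n) : Prop :=
  E.IsPositive ∧ (1 - E).IsPositive

/-- The reliability `R_ψ(E) = p⟪ψ, (diag E)ψ⟫ + (1-p)⟪ψ, (I-E)ψ⟫` of the yes–no
experiment with effect `E` for detecting a collapse (of probability `p`) onto the
standard basis, given initial wave function `ψ`. -/
def reliability {n : ℕ} (p : ℝ) (E : Vn n →L[ℂ] Vn n) (ψ : Vn n) : ℝ :=
  p * (⟪ψ, diagOp E ψ⟫_ℂ).re + (1 - p) * (⟪ψ, (1 - E) ψ⟫_ℂ).re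
/-- (Proposition 1.) For `n = 2`, `ψ = (b₁ + b₂)/√2`, every `p ∈ [0, 2/3]` and every
effect `E` on `ℂ²`, the reliability satisfies `R_ψ(E) ≤ 1 - p/2`: no experiment can
retrodict whether a collapse occurred with greater reliability than the quantum
measurement of `I - |ψ⟩⟨ψ|`. -/
theorem stmt_2 (p : ℝ) (hp : p ∈ Set.Icc (0 : ℝ) (2 / 3))
    (E : Vn 2 →L[ℂ] Vn 2) (hE : IsEffect E) :
    reliability p E (((Real.sqrt 2 : ℝ) : ℂ)⁻¹ • (basisVec 2 0 + basisVec 2 1))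
      ≤ 1 - p / 2 := by
  obtain ⟨hp0, hp1⟩ := hp
  have hc : ((Real.sqrt 2 : ℝ) : ℂ)⁻¹ * ((Real.sqrt 2 : ℝ) : ℂ)⁻¹ = 2⁻¹ := by
    rw [← mul_inv, ← Complex.ofReal_mul, Real.mul_self_sqrt (by norm_num)]
    norm_num
  set u := basisVec 2 0
  set w := basisVec 2 1
  set e00 := E u 0; set e01 := E w 0; set e10 := E u 1; set e11 := E w 1
  -- positivity of E at u + w
  have hx : 0 ≤ (e00 + e01 + e10 + e11).re := by
    have := hE.1.inner_nonneg_right (u + w)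
    rw [show ⟪u + w, E (u + w)⟫_ℂ = e00 + e01 + e10 + e11 from ?_] at this
    · exact (Complex.le_def.mp this).1
    · simp [u, w, e00, e01, e10, e11, basisVec, map_add, inner_add_left, inner_add_right,
        EuclideanSpace.inner_single_left]
      ring
  -- positivity of 1 - E at u - w
  have hy : (e00 - e01 - e10 + e11).re ≤ 2 := by
    have := hE.2.inner_nonneg_right (u - w)
    rw [show ⟪u - w, (1 - E) (u - w)⟫_ℂ = 2 - (e00 - e01 - e10 + e11) from ?_] at this
    · have h0 : (0:ℝ) ≤ (2 - (e00 - e01 - e10 + e11)).re := (Complex.le_def.mp this).1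
      simp only [Complex.sub_re] at h0
      norm_num at h0
      simp only [Complex.add_re, Complex.sub_re]
      linarith
    · simp [u, w, e00, e01, e10, e11, basisVec, map_sub, inner_sub_left, inner_sub_right,
        ContinuousLinearMap.sub_apply, ContinuousLinearMap.one_apply,
        EuclideanSpace.inner_single_left, EuclideanSpace.inner_single_right]
      ring
  -- compute the two inner products in reliability
  have hdiag : ⟪(((Real.sqrt 2 : ℝ) : ℂ)⁻¹ • (u + w)),
      diagOp E ((((Real.sqrt 2 : ℝ) : ℂ)⁻¹ • (u + w)))⟫_ℂ = 2⁻¹ * (e00 + e11) := by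
    simp [diagOp, rankOne, u, w, e00, e11, basisVec, Fin.sum_univ_two, inner_smul_left,
      inner_smul_right, inner_add_left, inner_add_right, EuclideanSpace.inner_single_left,
      EuclideanSpace.inner_single_right, map_add, Complex.conj_ofReal]
    linear_combination (E (EuclideanSpace.single 0 1) 0 + E (EuclideanSpace.single 1 1) 1) * hc
  have hsub : ⟪(((Real.sqrt 2 : ℝ) : ℂ)⁻¹ • (u + w)),
      (1 - E) ((((Real.sqrt 2 : ℝ) : ℂ)⁻¹ • (u + w)))⟫_ℂ
      = 1 - 2⁻¹ * (e00 + e01 + e10 + e11) := by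
    simp [u, w, e00, e01, e10, e11, basisVec, inner_smul_left, inner_smul_right,
      inner_add_left, inner_add_right, map_add, ContinuousLinearMap.sub_apply,
      ContinuousLinearMap.one_apply, EuclideanSpace.inner_single_left,
      EuclideanSpace.inner_single_right, Complex.conj_ofReal]
    linear_combination (2 - (E (EuclideanSpace.single 0 1) 0 + E (EuclideanSpace.single 0 1) 1
      + E (EuclideanSpace.single 1 1) 0 + E (EuclideanSpace.single 1 1) 1)) * hc
  rw [reliability, hdiag, hsub]
  set P := (e00 + e01 + e10 + e11).re with hP
  have hS : ((2:ℂ)⁻¹ * (e00 + e11)).re = 2⁻¹ * (e00 + e11).re := by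
    simp [Complex.mul_re]
  have hT : ((1:ℂ) - 2⁻¹ * (e00 + e01 + e10 + e11)).re = 1 - 2⁻¹ * P := by
    simp [Complex.sub_re, Complex.mul_re, hP]
  rw [hS, hT]
  have hQ : (e00 + e11).re = (P + (e00 - e01 - e10 + e11).re) / 2 := by
    simp [hP, Complex.add_re, Complex.sub_re]; ring
  rw [hQ]
  set Q := (e00 - e01 - e10 + e11).re
  nlinarith [hx, hy, hp0, hp1]
end
end

section
/- (Proposition 2.) Let n = 2 and ψ = (b₁ + b₂)/√2. For every p ∈ [2/3, 1] and every effect E on ℂ², the reliability satisfies R_ψ(E) ≤ p; that is, no experiment can retrodict whether a collapse has occurred with greater reliability than blind guessing. -/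
open scoped InnerProductSpace
open MeasureTheory Finset

noncomputable section

/-- (Proposition 2.) For `n = 2`, `ψ = (b₁ + b₂)/√2`, every `p ∈ [2/3, 1]` and every
effect `E` on `ℂ²`, the reliability satisfies `R_ψ(E) ≤ p`: no experiment can
retrodict whether a collapse occurred with greater reliability than blind guessing. -/
theorem stmt_3 (p : ℝ) (hp : p ∈ Set.Icc (2 / 3 : ℝ) 1)
    (E : Vn 2 →L[ℂ] Vn 2) (hE : IsEffect E) :
    reliability p E (((Real.sqrt 2 : ℝ) : ℂ)⁻¹ • (basisVec 2 0 + basisVec 2 1)) ≤ p := by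
  obtain ⟨hE1, hE2⟩ := hE
  obtain ⟨hp1, hp2⟩ := hp
  set u : Vn 2 := basisVec 2 0 with hu
  set v : Vn 2 := basisVec 2 1 with hv
  have huu : ⟪u, u⟫_ℂ = 1 := by
    simp [hu, basisVec, EuclideanSpace.inner_single_left, EuclideanSpace.single_apply]
  have hvv : ⟪v, v⟫_ℂ = 1 := by
    simp [hv, basisVec, EuclideanSpace.inner_single_left, EuclideanSpace.single_apply]
  have huv : ⟪u, v⟫_ℂ = 0 := by
    simp [hu, hv, basisVec, EuclideanSpace.inner_single_left, EuclideanSpace.single_apply]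
  have hvu : ⟪v, u⟫_ℂ = 0 := by
    simp [hu, hv, basisVec, EuclideanSpace.inner_single_left, EuclideanSpace.single_apply]
  set c : ℂ := ((Real.sqrt 2 : ℝ) : ℂ)⁻¹ with hc
  have hcconj : (starRingEnd ℂ) c = c := by simp [hc]
  have hcc : c ^ 2 = 1/2 := by
    have h2 : ((Real.sqrt 2 : ℝ) : ℂ) ^ 2 = 2 := by
      norm_cast
      rw [Real.sq_sqrt (by norm_num : (0:ℝ) ≤ 2)]
    rw [hc, inv_pow, h2]
    norm_num
  set a : ℂ := ⟪u, E u⟫_ℂ with ha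
  set d : ℂ := ⟪v, E v⟫_ℂ with hd
  set b : ℂ := ⟪u, E v⟫_ℂ with hb
  set b' : ℂ := ⟪v, E u⟫_ℂ with hb'
  set ψ : Vn 2 := c • (u + v) with hψ
  have hA0 : 0 ≤ a.re := (Complex.le_def.mp (hE1.inner_nonneg_right u)).1
  have hD0 : 0 ≤ d.re := (Complex.le_def.mp (hE1.inner_nonneg_right v)).1
  have hA1 : a.re ≤ 1 := by
    have := hE2.inner_nonneg_right u
    simp only [ContinuousLinearMap.sub_apply, ContinuousLinearMap.one_apply,
      inner_sub_right, huu, ← ha, map_sub, RCLike.one_re, RCLike.re_to_complex] at this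
    have := (Complex.le_def.mp this).1
    simp only [Complex.zero_re, Complex.sub_re, Complex.one_re] at this
    linarith
  have hD1 : d.re ≤ 1 := by
    have := hE2.inner_nonneg_right v
    simp only [ContinuousLinearMap.sub_apply, ContinuousLinearMap.one_apply,
      inner_sub_right, hvv, ← hd, map_sub, RCLike.one_re, RCLike.re_to_complex] at this
    have := (Complex.le_def.mp this).1
    simp only [Complex.zero_re, Complex.sub_re, Complex.one_re] at this
    linarith
  have hcross : 0 ≤ 2 - a.re - d.re + b.re + b'.re := by
    have := hE2.inner_nonneg_right (u - v)
    simp only [ContinuousLinearMap.sub_apply, ContinuousLinearMap.one_apply,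
      map_sub, inner_sub_left, inner_sub_right, huu, hvv, huv, hvu,
      ← ha, ← hd, ← hb, ← hb', map_add, RCLike.one_re, map_zero, RCLike.re_to_complex,
      Complex.sub_re, Complex.add_re, Complex.zero_re, Complex.one_re] at this
    have := (Complex.le_def.mp this).1
    simp only [Complex.zero_re, Complex.sub_re, Complex.one_re] at this
    linarith
  have h1 : (⟪ψ, diagOp E ψ⟫_ℂ).re = (a.re + d.re)/2 := by
    have key : ⟪ψ, diagOp E ψ⟫_ℂ = (a + d) * (1/2 : ℂ) := by
      simp only [diagOp, rankOne, hψ, Fin.sum_univ_two, ← hu, ← hv, ← ha, ← hd,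
        ContinuousLinearMap.add_apply, ContinuousLinearMap.smul_apply,
        ContinuousLinearMap.smulRight_apply, innerSL_apply_apply,
        inner_add_left, inner_add_right, inner_smul_left, inner_smul_right,
        huu, hvv, huv, hvu, hcconj]
      ring_nf
      rw [show ((Real.sqrt 2 : ℝ) : ℂ)⁻¹ ^ 2 = 1/2 from hcc]
      ring
    rw [key]
    have : ((a + d) * (1/2 : ℂ)).re = (a.re + d.re)/2 := by
      simp [Complex.mul_re, Complex.add_re]
      ring
    rw [this]
  have h2 : (⟪ψ, (1 - E) ψ⟫_ℂ).re = 1 - (a.re + d.re + b.re + b'.re)/2 := by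
    have key : ⟪ψ, (1 - E) ψ⟫_ℂ = 1 - (a + b + b' + d) * (1/2 : ℂ) := by
      simp only [hψ, ContinuousLinearMap.sub_apply, ContinuousLinearMap.one_apply,
        _root_.map_smul, map_add, inner_sub_right, smul_add,
        inner_add_left, inner_add_right, inner_smul_left, inner_smul_right,
        huu, hvv, huv, hvu, hcconj, ← ha, ← hd, ← hb, ← hb']
      ring_nf
      rw [show ((Real.sqrt 2 : ℝ) : ℂ)⁻¹ ^ 2 = 1/2 from hcc]
      ring
    rw [key]
    simp [Complex.sub_re, Complex.mul_re, Complex.add_re]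
    ring
  rw [reliability, h1, h2]
  nlinarith [mul_nonneg (by linarith : (0:ℝ) ≤ 1 - p)
      (by linarith : (0:ℝ) ≤ 2 - a.re - d.re + b.re + b'.re),
    mul_nonneg (by linarith : (0:ℝ) ≤ 3*p - 2) (by linarith : (0:ℝ) ≤ 2 - a.re - d.re)]
end
end

section
/- For every n ≥ 1, every unit vector ψ ∈ ℂ^n, every p ∈ [0, n/(n+1)], and every effect E on ℂ^n, the reliability satisfies R_ψ(E) ≤ 1 − p/n. -/
open scoped InnerProductSpace
open MeasureTheory Finset

noncomputable section

lemma cs_pos {n : ℕ} {F : Vn n →L[ℂ] Vn n} (hF : F.IsPositive) (x y : Vn n) :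
    ‖⟪x, F y⟫_ℂ‖ ^ 2 ≤ (⟪x, F x⟫_ℂ).re * (⟪y, F y⟫_ℂ).re := by
  have hsymm : ∀ a b : Vn n, ⟪F a, b⟫_ℂ = ⟪a, F b⟫_ℂ :=
    fun a b => hF.1 a b
  have hpos : ∀ a : Vn n, 0 ≤ (⟪a, F a⟫_ℂ).re := by
    intro a
    exact hF.re_inner_nonneg_right a
  have hexp : ∀ (v w : Vn n) (t : ℝ), (⟪v + (t:ℂ) • w, F (v + (t:ℂ) • w)⟫_ℂ).re
      = (⟪v, F v⟫_ℂ).re + t * ((⟪v, F w⟫_ℂ).re + (⟪w, F v⟫_ℂ).re)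
        + t * t * (⟪w, F w⟫_ℂ).re := by
    intro v w t
    simp only [_root_.map_add, _root_.map_smul, inner_add_left, inner_add_right, inner_smul_left,
      inner_smul_right, Complex.conj_ofReal, Complex.add_re, Complex.mul_re,
      Complex.ofReal_re, Complex.ofReal_im, Complex.add_im, Complex.mul_im]
    ring
  by_cases hc : ⟪x, F y⟫_ℂ = 0
  · rw [hc]
    simp only [norm_zero, ne_eq, OfNat.ofNat_ne_zero, not_false_eq_true, zero_pow]
    exact mul_nonneg (hpos x) (hpos y)
  set c := ⟪x, F y⟫_ℂ with hcdef
  set a : ℂ := c / (‖c‖) with hadef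
  have hca : (‖c‖ : ℝ) ≠ 0 := by simpa using hc
  have hca' : (‖c‖ : ℂ) ≠ 0 := by exact_mod_cast hca
  have hconj : (starRingEnd ℂ) a * c = (‖c‖ : ℂ) := by
    rw [hadef, map_div₀, Complex.conj_ofReal, div_mul_eq_mul_div, mul_comm,
      Complex.mul_conj]
    rw [div_eq_iff hca', Complex.normSq_eq_norm_sq]
    push_cast
    ring
  have hnorma : (starRingEnd ℂ) a * a = 1 := by
    rw [hadef, map_div₀, Complex.conj_ofReal, div_mul_div_comm, mul_comm,
      Complex.mul_conj]
    rw [div_eq_one_iff_eq (by simpa using mul_ne_zero hca' hca'), Complex.normSq_eq_norm_sq]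
    push_cast
    ring
  have hA : ⟪a • x, F (a • x)⟫_ℂ = ⟪x, F x⟫_ℂ := by
    rw [_root_.map_smul, inner_smul_left, inner_smul_right, ← mul_assoc, hnorma, one_mul]
  have hB : ⟪a • x, F y⟫_ℂ = (‖c‖ : ℂ) := by
    rw [inner_smul_left, ← hcdef, hconj]
  have hB' : ⟪y, F (a • x)⟫_ℂ = (‖c‖ : ℂ) := by
    rw [← inner_conj_symm, hsymm, hB, Complex.conj_ofReal]
  have key : ∀ t : ℝ, 0 ≤ (⟪y, F y⟫_ℂ).re * (t * t) + (2 * ‖c‖) * t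
      + (⟪x, F x⟫_ℂ).re := by
    intro t
    have h0 := hpos ((a • x) + (t : ℂ) • y)
    rw [hexp, hA, hB, hB'] at h0
    simp only [Complex.ofReal_re] at h0
    linarith
  have hd := discrim_le_zero key
  rw [discrim] at hd
  nlinarith [hd, hpos x, hpos y, norm_nonneg c]

/-- For every `n ≥ 1`, every unit vector `ψ ∈ ℂⁿ`, every `p ∈ [0, n/(n+1)]`, and
every effect `E` on `ℂⁿ`, the reliability satisfies `R_ψ(E) ≤ 1 - p/n`. -/
theorem stmt_4 (n : ℕ) (hn : 1 ≤ n) (ψ : Vn n) (hψ : ‖ψ‖ = 1)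
    (p : ℝ) (hp : p ∈ Set.Icc (0 : ℝ) ((n : ℝ) / ((n : ℝ) + 1)))
    (E : Vn n →L[ℂ] Vn n) (hE : IsEffect E) :
    reliability p E ψ ≤ 1 - p / (n : ℝ) := by
  obtain ⟨hE1, hF⟩ := hE
  have hnpos : (0:ℝ) < n := by exact_mod_cast hn
  have hp0 : 0 ≤ p := hp.1
  have hp' : p * ((n:ℝ) + 1) ≤ n := by
    have := hp.2
    rwa [le_div_iff₀ (by positivity)] at this
  -- evaluation of basis vectors
  have hbv : ∀ (k : Fin n) (v : Vn n), ⟪basisVec n k, v⟫_ℂ = v k := by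
    intro k v
    simp [basisVec, EuclideanSpace.inner_single_left]
  have hvb : ∀ (k : Fin n) (v : Vn n), ⟪v, basisVec n k⟫_ℂ = (starRingEnd ℂ) (v k) := by
    intro k v
    rw [← inner_conj_symm, hbv]
  set aa : Fin n → ℝ := fun k => Complex.normSq (ψ k) with haa
  set e : Fin n → ℝ := fun k => (⟪basisVec n k, (1 - E) (basisVec n k)⟫_ℂ).re with he
  set s : ℝ := (⟪ψ, (1 - E) ψ⟫_ℂ).re with hs
  have haa0 : ∀ k, 0 ≤ aa k := fun k => Complex.normSq_nonneg _
  have he0 : ∀ k, 0 ≤ e k := fun k => hF.re_inner_nonneg_right _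
  have hs0 : 0 ≤ s := hF.re_inner_nonneg_right _
  -- sum of aa equals 1
  have hsum : ∑ k, aa k = 1 := by
    have h1 : (⟪ψ, ψ⟫_ℂ).re = 1 := by
      have h := inner_self_eq_norm_sq (𝕜 := ℂ) ψ
      rw [hψ] at h
      simp only [RCLike.re_to_complex, one_pow] at h
      exact h
    rw [← h1, PiLp.inner_apply]
    rw [Complex.re_sum]
    refine Finset.sum_congr rfl fun k _ => ?_
    simp only [haa, RCLike.inner_apply, Complex.mul_re, Complex.conj_re, Complex.conj_im,
      Complex.normSq_apply]
    ring
  -- s ≤ 1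
  have hs1 : s ≤ 1 := by
    have h2 : (⟪ψ, E ψ⟫_ℂ).re ≥ 0 := hE1.re_inner_nonneg_right _
    have h3 : s = 1 - (⟪ψ, E ψ⟫_ℂ).re := by
      rw [hs, ContinuousLinearMap.sub_apply, ContinuousLinearMap.one_apply, inner_sub_right,
        Complex.sub_re]
      have h1 : (⟪ψ, ψ⟫_ℂ).re = 1 := by
        have h := inner_self_eq_norm_sq (𝕜 := ℂ) ψ
        rw [hψ] at h
        simp only [RCLike.re_to_complex, one_pow] at h
        exact h
      rw [h1]
    linarith
  -- the diagonal term
  have hdiag : (⟪ψ, diagOp E ψ⟫_ℂ).re = ∑ k, (1 - e k) * aa k := by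
    have hEd : ∀ k : Fin n, (⟪basisVec n k, E (basisVec n k)⟫_ℂ).re = 1 - e k := by
      intro k
      have hb1 : (⟪basisVec n k, basisVec n k⟫_ℂ).re = 1 := by
        rw [hbv]; simp [basisVec, EuclideanSpace.single_apply]
      rw [he]
      simp only [ContinuousLinearMap.sub_apply, ContinuousLinearMap.one_apply, inner_sub_right,
        Complex.sub_re, hb1]
      ring
    have h4 : ⟪ψ, diagOp E ψ⟫_ℂ
        = ∑ k, ⟪basisVec n k, E (basisVec n k)⟫_ℂ * ((ψ k) * (starRingEnd ℂ) (ψ k)) := by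
      rw [diagOp, ContinuousLinearMap.sum_apply, inner_sum]
      refine Finset.sum_congr rfl fun k _ => ?_
      rw [ContinuousLinearMap.smul_apply, inner_smul_right]
      rw [rankOne, ContinuousLinearMap.smulRight_apply, innerSL_apply_apply, inner_smul_right,
        hvb]
      simp only [hbv]
    rw [h4, Complex.re_sum]
    refine Finset.sum_congr rfl fun k _ => ?_
    have h5 : (ψ k) * (starRingEnd ℂ) (ψ k) = ((aa k : ℝ) : ℂ) := by
      rw [haa]; exact Complex.mul_conj _
    rw [h5, Complex.mul_re, Complex.ofReal_re, Complex.ofReal_im, mul_zero, sub_zero, hEd k]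
  -- Cauchy-Schwarz per coordinate
  have hcs : ∀ k, ‖((1 - E) ψ) k‖ ^ 2 ≤ e k * s := by
    intro k
    have := cs_pos hF (basisVec n k) ψ
    rwa [hbv] at this
  -- bound s by sqrt s * sum
  have habs : ∀ k, ‖((1 - E) ψ) k‖ ≤ Real.sqrt (e k * s) := by
    intro k
    rw [show ‖((1 - E) ψ) k‖ = Real.sqrt (‖((1 - E) ψ) k‖ ^ 2) by
      rw [Real.sqrt_sq (norm_nonneg _)]]
    exact Real.sqrt_le_sqrt (hcs k)
  have hs_le : s ≤ Real.sqrt s * ∑ k, Real.sqrt (aa k * e k) := by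
    have h6 : s = ∑ k, ((starRingEnd ℂ) (ψ k) * ((1 - E) ψ) k).re := by
      rw [hs, PiLp.inner_apply, Complex.re_sum]
      refine Finset.sum_congr rfl fun k _ => ?_
      simp only [RCLike.inner_apply, mul_comm]
    conv_lhs => rw [h6]
    rw [Finset.mul_sum]
    refine Finset.sum_le_sum fun k _ => ?_
    calc ((starRingEnd ℂ) (ψ k) * ((1 - E) ψ) k).re
        ≤ ‖(starRingEnd ℂ) (ψ k) * ((1 - E) ψ) k‖ := Complex.re_le_norm _
      _ = ‖ψ k‖ * ‖((1 - E) ψ) k‖ := by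
          rw [norm_mul, Complex.norm_conj]
      _ ≤ ‖ψ k‖ * Real.sqrt (e k * s) :=
          mul_le_mul_of_nonneg_left (habs k) (norm_nonneg _)
      _ = Real.sqrt s * Real.sqrt (aa k * e k) := by
          rw [show ‖ψ k‖ = Real.sqrt (aa k) by
            rw [haa]; simp [Complex.normSq_eq_norm_sq, Real.sqrt_sq (norm_nonneg _)]]
          rw [Real.sqrt_mul (he0 k), Real.sqrt_mul (haa0 k)]
          ring
  -- s ≤ n * T
  set T : ℝ := ∑ k, aa k * e k with hT
  have hT0 : 0 ≤ T := Finset.sum_nonneg fun k _ => mul_nonneg (haa0 k) (he0 k)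
  have hQ : (∑ k, Real.sqrt (aa k * e k)) ^ 2 ≤ (n : ℝ) * T := by
    have h7 := Finset.sum_mul_sq_le_sq_mul_sq Finset.univ (fun _ : Fin n => (1:ℝ))
      (fun k => Real.sqrt (aa k * e k))
    simp only [one_mul, one_pow, mul_one, Finset.sum_const, Finset.card_univ,
      Fintype.card_fin, nsmul_eq_mul] at h7
    calc (∑ k, Real.sqrt (aa k * e k)) ^ 2
        ≤ (n : ℝ) * ∑ k, Real.sqrt (aa k * e k) ^ 2 := h7
      _ = (n : ℝ) * T := by
          rw [hT]
          congr 1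
          refine Finset.sum_congr rfl fun k _ => ?_
          exact Real.sq_sqrt (mul_nonneg (haa0 k) (he0 k))
  have hsT : s ≤ (n : ℝ) * T := by
    rcases eq_or_lt_of_le hs0 with h | h
    · rw [← h]; positivity
    · have hsqrt : Real.sqrt s ≤ ∑ k, Real.sqrt (aa k * e k) := by
        have h8 : Real.sqrt s * Real.sqrt s ≤ Real.sqrt s * ∑ k, Real.sqrt (aa k * e k) := by
          rw [Real.mul_self_sqrt hs0]; exact hs_le
        exact le_of_mul_le_mul_left h8 (Real.sqrt_pos.mpr h)
      calc s = Real.sqrt s ^ 2 := (Real.sq_sqrt hs0).symm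
        _ ≤ (∑ k, Real.sqrt (aa k * e k)) ^ 2 := by
            apply pow_le_pow_left₀ (Real.sqrt_nonneg _) hsqrt
        _ ≤ (n : ℝ) * T := hQ
  -- final algebra
  have hdiag2 : (⟪ψ, diagOp E ψ⟫_ℂ).re = 1 - T := by
    rw [hdiag, hT]
    rw [show ∑ k, (1 - e k) * aa k = (∑ k, aa k) - ∑ k, aa k * e k by
      rw [← Finset.sum_sub_distrib]
      exact Finset.sum_congr rfl fun k _ => by ring]
    rw [hsum]
  rw [reliability, hdiag2, ← hs]
  rw [show (1 : ℝ) - p / n = ((n : ℝ) - p) / n by field_simp, le_div_iff₀ hnpos]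
  have h9 : 0 ≤ p * ((n:ℝ) * T - s) := mul_nonneg hp0 (by linarith)
  have h10 : 0 ≤ (1 - s) * ((n:ℝ) - p * ((n:ℝ) + 1)) :=
    mul_nonneg (by linarith) (by linarith)
  nlinarith [h9, h10]
end
end

section
/- Let n ≥ 1, let ψ = n^{-1/2}(b₁ + ⋯ + b_n), let p ∈ [0,1], and let E = I − |ψ⟩⟨ψ|. Then the reliability equals exactly R_ψ(E) = 1 − p/n; i.e., the bound R_ψ(E) ≤ 1 − p/n is attained by the quantum measurement of I − |ψ⟩⟨ψ| at the uniform superposition ψ. -/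
open scoped InnerProductSpace
open MeasureTheory Finset

noncomputable section

lemma rankOne_apply {n : ℕ} (v w x : Vn n) : rankOne v w x = ⟪v, x⟫_ℂ • w := rfl


/-- For `n ≥ 1`, the uniform superposition `ψ = n^{-1/2}(b₁ + ⋯ + bₙ)`, any
`p ∈ [0,1]`, and the effect `E = I - |ψ⟩⟨ψ|`, the reliability equals exactly
`R_ψ(E) = 1 - p/n`; i.e., the bound `1 - p/n` is attained. -/
theorem stmt_5 (n : ℕ) (hn : 1 ≤ n) (p : ℝ) (hp : p ∈ Set.Icc (0 : ℝ) 1) :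
    reliability p
      (1 - rankOne (((Real.sqrt n : ℝ) : ℂ)⁻¹ • ∑ k : Fin n, basisVec n k)
            (((Real.sqrt n : ℝ) : ℂ)⁻¹ • ∑ k : Fin n, basisVec n k))
      (((Real.sqrt n : ℝ) : ℂ)⁻¹ • ∑ k : Fin n, basisVec n k) = 1 - p / (n : ℝ) := by
  have hn0 : (0:ℝ) < n := by exact_mod_cast hn
  set c : ℂ := ((Real.sqrt n : ℝ) : ℂ)⁻¹ with hc
  set ψ : Vn n := c • ∑ k : Fin n, basisVec n k with hψdef
  have hcc : c * c = (n : ℂ)⁻¹ := by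
    rw [hc, ← mul_inv, ← Complex.ofReal_mul, Real.mul_self_sqrt hn0.le]
    push_cast
    ring
  have hbψ : ∀ k : Fin n, ⟪basisVec n k, ψ⟫_ℂ = c := by
    intro k
    simp [hψdef, basisVec, inner_smul_right, inner_sum, EuclideanSpace.inner_single_left,
      EuclideanSpace.single_apply, Finset.sum_ite_eq]
  have hψb : ∀ k : Fin n, ⟪ψ, basisVec n k⟫_ℂ = c := by
    intro k
    simp [hψdef, basisVec, inner_smul_left, sum_inner, EuclideanSpace.inner_single_left,
      EuclideanSpace.single_apply, Finset.sum_ite_eq, hc]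
  have hψψ : ⟪ψ, ψ⟫_ℂ = 1 := by
    nth_rewrite 2 [hψdef]
    rw [inner_smul_right, inner_sum]
    simp only [hψb]
    rw [Finset.sum_const, Finset.card_univ, Fintype.card_fin, nsmul_eq_mul, ← mul_assoc,
      mul_comm c, mul_assoc, hcc]
    exact mul_inv_cancel₀ (by exact_mod_cast hn0.ne')
  have hbb : ∀ k : Fin n, ⟪basisVec n k, basisVec n k⟫_ℂ = 1 := by
    intro k
    simp [basisVec, EuclideanSpace.inner_single_left, EuclideanSpace.single_apply]
  -- diag entries
  have hdiag : ∀ k : Fin n,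
      ⟪basisVec n k, (1 - rankOne ψ ψ) (basisVec n k)⟫_ℂ = 1 - (n:ℂ)⁻¹ := by
    intro k
    rw [ContinuousLinearMap.sub_apply, ContinuousLinearMap.one_apply, inner_sub_right,
      rankOne_apply, inner_smul_right, hbb, hψb, hbψ, hcc]
  have h1 : ⟪ψ, (1 - (1 - rankOne ψ ψ)) ψ⟫_ℂ = 1 := by
    rw [sub_sub_cancel, rankOne_apply, inner_smul_right, hψψ, mul_one]
  have h2 : ⟪ψ, diagOp (1 - rankOne ψ ψ) ψ⟫_ℂ = 1 - (n:ℂ)⁻¹ := by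
    rw [diagOp]
    simp only [ContinuousLinearMap.sum_apply, ContinuousLinearMap.smul_apply, inner_sum,
      inner_smul_right, rankOne_apply, hdiag, hbψ, hψb]
    rw [Finset.sum_const, Finset.card_univ, Fintype.card_fin, nsmul_eq_mul]
    have : (1 - (n:ℂ)⁻¹) * (c * c) = (1 - (n:ℂ)⁻¹) * (n:ℂ)⁻¹ := by rw [hcc]
    rw [this]
    have hnC : (n:ℂ) ≠ 0 := by exact_mod_cast hn0.ne'
    field_simp
  rw [reliability, h1, h2]
  have hre : ((1 : ℂ) - (n:ℂ)⁻¹).re = 1 - (n:ℝ)⁻¹ := by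
    simp [Complex.sub_re, Complex.inv_re]
  rw [hre]
  simp only [Complex.one_re]
  field_simp
  ring
end
end

section
/- For every n ≥ 1, every unit vector ψ ∈ ℂ^n, every p ∈ [n/(n+1), 1], and every effect E on ℂ^n, the reliability satisfies R_ψ(E) ≤ p; that is, for p ≥ n/(n+1) no experiment is more reliable than blind guessing. -/
open scoped InnerProductSpace
open MeasureTheory Finset

noncomputable section

set_option synthInstance.maxHeartbeats 1000000
set_option maxHeartbeats 1000000

private lemma sum_repr' {n : ℕ} (ψ : Vn n) : ψ = ∑ k, ψ k • basisVec n k := by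
  have := (EuclideanSpace.basisFun (Fin n) ℂ).sum_repr ψ
  simpa [basisVec, EuclideanSpace.basisFun_apply] using this.symm

/-- Key lemma: for positive F, re⟪ψ, F ψ⟫ ≤ n * ∑ re⟪b_k, F b_k⟫ ‖ψ k‖². -/
private lemma key {n : ℕ} (F : Vn n →L[ℂ] Vn n) (hF : F.IsPositive) (ψ : Vn n) :
    (⟪ψ, F ψ⟫_ℂ).re ≤ (n : ℝ) * ∑ k, (⟪basisVec n k, F (basisVec n k)⟫_ℂ).re * ‖ψ k‖ ^ 2 := by
  have hF' : (0 : Vn n →L[ℂ] Vn n) ≤ F := (ContinuousLinearMap.nonneg_iff_isPositive F).2 hF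
  set S := CFC.sqrt F with hS
  have hSpos : S.IsPositive :=
    (ContinuousLinearMap.nonneg_iff_isPositive S).1 (CFC.sqrt_nonneg F)
  have hSS : S * S = F := CFC.sqrt_mul_sqrt_self F hF'
  have hsa : ContinuousLinearMap.adjoint S = S := hSpos.isSelfAdjoint
  have hre : ∀ x : Vn n, (⟪x, F x⟫_ℂ).re = ‖S x‖ ^ 2 := by
    intro x
    have : ⟪x, F x⟫_ℂ = ⟪S x, S x⟫_ℂ := by
      rw [← hSS]
      calc ⟪x, (S * S) x⟫_ℂ = ⟪x, S (S x)⟫_ℂ := rfl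
        _ = ⟪(ContinuousLinearMap.adjoint S) x, S x⟫_ℂ := by
            rw [ContinuousLinearMap.adjoint_inner_left]
        _ = ⟪S x, S x⟫_ℂ := by rw [hsa]
    rw [this]
    exact inner_self_eq_norm_sq (𝕜 := ℂ) (S x)
  rw [hre]
  have hdiag : ∀ k, (⟪basisVec n k, F (basisVec n k)⟫_ℂ).re = ‖S (basisVec n k)‖ ^ 2 :=
    fun k => hre _
  simp only [hdiag]
  have h1 : ‖S ψ‖ ≤ ∑ k, ‖ψ k‖ * ‖S (basisVec n k)‖ := by
    calc ‖S ψ‖ = ‖∑ k, ψ k • S (basisVec n k)‖ := by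
          conv_lhs => rw [sum_repr' ψ]
          rw [map_sum]
          simp [ContinuousLinearMap.map_smul]
      _ ≤ ∑ k, ‖ψ k • S (basisVec n k)‖ := norm_sum_le _ _
      _ = ∑ k, ‖ψ k‖ * ‖S (basisVec n k)‖ := by simp [norm_smul]
  have h2 : (∑ k, ‖ψ k‖ * ‖S (basisVec n k)‖) ^ 2 ≤
      (n : ℝ) * ∑ k, ‖S (basisVec n k)‖ ^ 2 * ‖ψ k‖ ^ 2 := by
    have h := sq_sum_le_card_mul_sum_sq (s := univ)
      (f := fun k => ‖ψ k‖ * ‖S (basisVec n k)‖)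
    simp only [Finset.card_univ, Fintype.card_fin] at h
    calc (∑ k, ‖ψ k‖ * ‖S (basisVec n k)‖) ^ 2
        ≤ (n:ℝ) * ∑ k, (‖ψ k‖ * ‖S (basisVec n k)‖) ^ 2 := h
      _ = (n:ℝ) * ∑ k, ‖S (basisVec n k)‖ ^ 2 * ‖ψ k‖ ^ 2 := by
          congr 1; apply Finset.sum_congr rfl; intros; ring
  calc ‖S ψ‖ ^ 2 ≤ (∑ k, ‖ψ k‖ * ‖S (basisVec n k)‖) ^ 2 := by
        apply pow_le_pow_left₀ (norm_nonneg _) h1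
    _ ≤ _ := h2


/-- For every `n ≥ 1`, every unit vector `ψ ∈ ℂⁿ`, every `p ∈ [n/(n+1), 1]`, and
every effect `E` on `ℂⁿ`, the reliability satisfies `R_ψ(E) ≤ p`: for such `p` no
experiment is more reliable than blind guessing. -/
theorem stmt_6 (n : ℕ) (hn : 1 ≤ n) (ψ : Vn n) (hψ : ‖ψ‖ = 1)
    (p : ℝ) (hp : p ∈ Set.Icc ((n : ℝ) / ((n : ℝ) + 1)) 1)
    (E : Vn n →L[ℂ] Vn n) (hE : IsEffect E) :
    reliability p E ψ ≤ p := by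
  obtain ⟨hp1, hp2⟩ := hp
  set e : Fin n → ℝ := fun k => (⟪basisVec n k, E (basisVec n k)⟫_ℂ).re with he
  set f : Fin n → ℝ := fun k => (⟪basisVec n k, (1 - E) (basisVec n k)⟫_ℂ).re with hf
  have hsum : ∑ k, ‖ψ k‖ ^ 2 = 1 := by
    have h := hψ
    rw [EuclideanSpace.norm_eq] at h
    have : ∑ k, ‖ψ k‖ ^ 2 = (Real.sqrt (∑ k, ‖ψ k‖ ^ 2)) ^ 2 :=
      (Real.sq_sqrt (by positivity)).symm
    rw [this, h, one_pow]
  have hbnorm : ∀ k : Fin n, ‖basisVec n k‖ = 1 := by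
    intro k; simp [basisVec]
  have hfe : ∀ k, f k = 1 - e k := by
    intro k
    simp only [hf, he, ContinuousLinearMap.sub_apply, ContinuousLinearMap.one_apply,
      inner_sub_right, Complex.sub_re]
    have h11 : (⟪basisVec n k, basisVec n k⟫_ℂ).re = ‖basisVec n k‖ ^ 2 :=
      inner_self_eq_norm_sq (𝕜 := ℂ) _
    rw [h11, hbnorm k]; norm_num
  have hfnn : ∀ k, 0 ≤ f k := fun k => hE.2.re_inner_nonneg_right _
  -- diag term
  have hdiag : (⟪ψ, diagOp E ψ⟫_ℂ).re = ∑ k, e k * ‖ψ k‖ ^ 2 := by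
    have : ⟪ψ, diagOp E ψ⟫_ℂ
        = ∑ k, ⟪basisVec n k, E (basisVec n k)⟫_ℂ * (ψ k * (starRingEnd ℂ) (ψ k)) := by
      simp only [diagOp, ContinuousLinearMap.sum_apply, ContinuousLinearMap.smul_apply,
        rankOne, ContinuousLinearMap.smulRight_apply, innerSL_apply_apply, inner_sum,
        inner_smul_right]
      apply Finset.sum_congr rfl
      intro k _
      have h1 : ⟪basisVec n k, ψ⟫_ℂ = ψ k := by
        simp [basisVec, EuclideanSpace.inner_single_left]
      have h2 : ⟪ψ, basisVec n k⟫_ℂ = (starRingEnd ℂ) (ψ k) := by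
        simp [basisVec, EuclideanSpace.inner_single_right]
      rw [h1, h2]
    rw [this, Complex.re_sum]
    apply Finset.sum_congr rfl
    intro k _
    have hcc : ψ k * (starRingEnd ℂ) (ψ k) = ((‖ψ k‖ ^ 2 : ℝ) : ℂ) := by
      rw [Complex.mul_conj, Complex.normSq_eq_norm_sq]
    rw [hcc, Complex.mul_re, Complex.ofReal_re, Complex.ofReal_im]
    simp only [he, mul_zero, sub_zero]
  -- second term and key bound
  set r : ℝ := (⟪ψ, (1 - E) ψ⟫_ℂ).re with hr
  have hkey : r ≤ (n : ℝ) * ∑ k, f k * ‖ψ k‖ ^ 2 := key (1 - E) hE.2 ψ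
  have hfs : ∑ k, f k * ‖ψ k‖ ^ 2 = 1 - ∑ k, e k * ‖ψ k‖ ^ 2 := by
    calc ∑ k, f k * ‖ψ k‖ ^ 2 = ∑ k, (‖ψ k‖ ^ 2 - e k * ‖ψ k‖ ^ 2) := by
          apply Finset.sum_congr rfl; intro k _; rw [hfe k]; ring
      _ = 1 - ∑ k, e k * ‖ψ k‖ ^ 2 := by rw [Finset.sum_sub_distrib, hsum]
  set D : ℝ := ∑ k, e k * ‖ψ k‖ ^ 2 with hD
  have hDle : 0 ≤ 1 - D := by
    rw [← hfs]
    apply Finset.sum_nonneg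
    intro k _
    exact mul_nonneg (hfnn k) (by positivity)
  have hkey' : r ≤ (n : ℝ) * (1 - D) := by rw [← hfs]; exact hkey
  have hnp : (n : ℝ) * (1 - p) ≤ p := by
    have hpos : (0:ℝ) < (n : ℝ) + 1 := by positivity
    rw [div_le_iff₀ hpos] at hp1
    nlinarith
  have h1p : (0:ℝ) ≤ 1 - p := by linarith
  rw [reliability, hdiag, ← hr]
  nlinarith [mul_le_mul_of_nonneg_left hkey' h1p, mul_nonneg h1p hDle]
end
end

section
/- (Proposition 3.) For every n ≥ 1, every p ∈ [0,1], and every effect E on ℂ^n, the uniform-average reliability R_u(E) = (1/n)·tr(p·diag E + (1−p)(I−E)) satisfies R_u(E) ≤ max{p, 1−p}. Moreover, if p = 1/2 then R_u(E) = 1/2 for every effect E; that is, for a uniformly distributed initial wave function no experiment is more reliable than blind guessing. -/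
open scoped InnerProductSpace
open MeasureTheory Finset

noncomputable section

lemma trace_eq_sum {n : ℕ} (T : Vn n →L[ℂ] Vn n) :
    LinearMap.trace ℂ (Vn n) ↑T = ∑ k : Fin n, ⟪basisVec n k, T (basisVec n k)⟫_ℂ := by
  rw [LinearMap.trace_eq_matrix_trace ℂ (EuclideanSpace.basisFun (Fin n) ℂ).toBasis]
  rw [Matrix.trace]
  congr 1
  ext k
  rw [Matrix.diag_apply, LinearMap.toMatrix_apply]
  simp only [OrthonormalBasis.coe_toBasis, OrthonormalBasis.coe_toBasis_repr_apply,
    EuclideanSpace.basisFun_repr, EuclideanSpace.basisFun_apply]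
  rw [basisVec, EuclideanSpace.inner_single_left]
  simp

lemma inner_diagOp {n : ℕ} (E : Vn n →L[ℂ] Vn n) (j : Fin n) :
    ⟪basisVec n j, diagOp E (basisVec n j)⟫_ℂ = ⟪basisVec n j, E (basisVec n j)⟫_ℂ := by
  simp only [diagOp, ContinuousLinearMap.sum_apply, ContinuousLinearMap.smul_apply,
    inner_sum, inner_smul_right, rankOne, ContinuousLinearMap.smulRight_apply, innerSL_apply_apply]
  have horth : ∀ k j : Fin n, ⟪basisVec n k, basisVec n j⟫_ℂ = if k = j then 1 else 0 := by
    intro k j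
    rw [basisVec, basisVec, EuclideanSpace.inner_single_left, EuclideanSpace.single_apply]
    simp
  simp only [inner_smul_right, horth]
  rw [Finset.sum_eq_single j]
  · simp
  · intro k _ hk; simp [hk]
  · simp

lemma inner_basisVec_self {n : ℕ} (k : Fin n) : ⟪basisVec n k, basisVec n k⟫_ℂ = 1 := by
  rw [basisVec, EuclideanSpace.inner_single_left, EuclideanSpace.single_apply]
  simp

/-- (Proposition 3.) For every `n ≥ 1`, `p ∈ [0,1]`, and effect `E` on `ℂⁿ`, the
uniform-average reliability `R_u(E) = (1/n)·tr(p·diag E + (1-p)(I-E))` satisfies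
`R_u(E) ≤ max{p, 1-p}`; moreover if `p = 1/2` then `R_u(E) = 1/2`. That is, for a
uniformly distributed initial wave function no experiment beats blind guessing. -/
theorem stmt_9 (n : ℕ) (hn : 1 ≤ n) (p : ℝ) (hp : p ∈ Set.Icc (0 : ℝ) 1)
    (E : Vn n →L[ℂ] Vn n) (hE : IsEffect E) :
    (1 / (n : ℝ)) *
        (LinearMap.trace ℂ (Vn n)
          ↑((p : ℂ) • diagOp E + ((1 - p : ℝ) : ℂ) • (1 - E))).re
      ≤ max p (1 - p)
    ∧ (p = 1 / 2 →
      (1 / (n : ℝ)) *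
        (LinearMap.trace ℂ (Vn n)
          ↑((p : ℂ) • diagOp E + ((1 - p : ℝ) : ℂ) • (1 - E))).re = 1 / 2) := by
  set S : ℂ := ∑ k : Fin n, ⟪basisVec n k, E (basisVec n k)⟫_ℂ with hS
  have h1 : LinearMap.trace ℂ (Vn n) ↑(diagOp E) = S := by
    rw [trace_eq_sum]
    exact Finset.sum_congr rfl fun k _ => inner_diagOp E k
  have h2 : LinearMap.trace ℂ (Vn n) ↑(1 - E : Vn n →L[ℂ] Vn n) = (n : ℂ) - S := by
    rw [trace_eq_sum]
    simp only [ContinuousLinearMap.sub_apply, ContinuousLinearMap.one_apply, inner_sub_right,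
      inner_basisVec_self, Finset.sum_sub_distrib, Finset.sum_const, Finset.card_univ,
      Fintype.card_fin, nsmul_eq_mul, mul_one, hS]
  have htr : LinearMap.trace ℂ (Vn n)
      ↑((p : ℂ) • diagOp E + ((1 - p : ℝ) : ℂ) • (1 - E))
      = (p : ℂ) * S + ((1 - p : ℝ) : ℂ) * ((n : ℂ) - S) := by
    rw [ContinuousLinearMap.coe_add, ContinuousLinearMap.coe_smul,
      ContinuousLinearMap.coe_smul, map_add, _root_.map_smul, _root_.map_smul,
      h1, h2, smul_eq_mul, smul_eq_mul]
  set T : ℝ := S.re with hT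
  have hre : (LinearMap.trace ℂ (Vn n)
      ↑((p : ℂ) • diagOp E + ((1 - p : ℝ) : ℂ) • (1 - E))).re
      = p * T + (1 - p) * ((n : ℝ) - T) := by
    rw [htr]
    simp [Complex.add_re, Complex.re_ofReal_mul, Complex.sub_re]
    rw [hT]
  have hT0 : 0 ≤ T := by
    rw [hT, hS, Complex.re_sum]
    exact Finset.sum_nonneg fun k _ => (Complex.nonneg_iff.mp (hE.1.inner_nonneg_right _)).1
  have hTn : T ≤ (n : ℝ) := by
    rw [hT, hS, Complex.re_sum]
    calc ∑ k : Fin n, (⟪basisVec n k, E (basisVec n k)⟫_ℂ).re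
        ≤ ∑ _k : Fin n, (1 : ℝ) := by
          refine Finset.sum_le_sum fun k _ => ?_
          have := hE.2.inner_nonneg_right (basisVec n k)
          simp only [ContinuousLinearMap.sub_apply, ContinuousLinearMap.one_apply,
            inner_sub_right, inner_basisVec_self, RCLike.re_to_complex, Complex.sub_re, Complex.one_re] at this
          have h' := (Complex.nonneg_iff.mp this).1
          rw [Complex.sub_re, Complex.one_re] at h'
          linarith
      _ = (n : ℝ) := by simp
  have hn' : (1 : ℝ) ≤ (n : ℝ) := by exact_mod_cast hn
  obtain ⟨hp0, hp1⟩ := hp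
  constructor
  · rw [hre]
    rcases le_total p (1 - p) with h | h
    · refine le_trans ?_ (le_max_right _ _)
      rw [div_mul_eq_mul_div, div_le_iff₀ (by linarith)]
      nlinarith
    · refine le_trans ?_ (le_max_left _ _)
      rw [div_mul_eq_mul_div, div_le_iff₀ (by linarith)]
      nlinarith
  · intro hp2
    rw [hre, hp2]
    field_simp
    ring
end
end

section
/- (Proposition 4.) Let ρ = (1/n)·I on ℂ^n, let p ∈ [0,1], and let E be any positive semidefinite operator on ℂ^n with tr E ≠ 0 (an outcome effect of an arbitrary experiment). Then the posterior probability that a collapse occurred, given that outcome, equals the prior: p·tr(ρ·diag E) / ( (1−p)·tr(ρ·E) + p·tr(ρ·diag E) ) = p. Hence, for a uniformly distributed initial wave function, no experiment conveys any information about whether a collapse has occurred. -/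
open scoped InnerProductSpace
open MeasureTheory Finset

noncomputable section

lemma trace_diag {n : ℕ} (E : Vn n →L[ℂ] Vn n) :
    LinearMap.trace ℂ (Vn n) ↑(diagOp E) = LinearMap.trace ℂ (Vn n) ↑E := by
  rw [trace_eq_sum, trace_eq_sum]
  refine Finset.sum_congr rfl fun j _ => ?_
  have hb : ∀ k j : Fin n, ⟪basisVec n k, basisVec n j⟫_ℂ = if k = j then 1 else 0 := by
    intro k j
    rw [basisVec, basisVec, EuclideanSpace.inner_single_left]
    simp [EuclideanSpace.single_apply]
  simp only [diagOp, ContinuousLinearMap.sum_apply, ContinuousLinearMap.smul_apply, rankOne,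
    ContinuousLinearMap.smulRight_apply, innerSL_apply_apply, inner_sum, inner_smul_right, hb]
  simp

/-- (Proposition 4.) For `ρ = (1/n)·I` on `ℂⁿ` (the density matrix of the uniform
distribution on the unit sphere), `p ∈ [0,1]`, and any positive semidefinite outcome
effect `E` with `tr E ≠ 0`, the posterior probability of a collapse given the outcome
equals the prior: `p·tr(ρ·diag E) / ((1-p)·tr(ρ·E) + p·tr(ρ·diag E)) = p`. Hence no
experiment conveys any information about whether a collapse occurred. -/
theorem stmt_10 (n : ℕ) (hn : 1 ≤ n) (p : ℝ) (hp : p ∈ Set.Icc (0 : ℝ) 1)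
    (E : Vn n →L[ℂ] Vn n) (hE : E.IsPositive)
    (htr : LinearMap.trace ℂ (Vn n) ↑E ≠ 0) :
    (p : ℂ) * LinearMap.trace ℂ (Vn n) ↑(((n : ℂ)⁻¹ • (1 : Vn n →L[ℂ] Vn n)) ∘L diagOp E) /
      (((1 - p : ℝ) : ℂ) *
          LinearMap.trace ℂ (Vn n) ↑(((n : ℂ)⁻¹ • (1 : Vn n →L[ℂ] Vn n)) ∘L E)
        + (p : ℂ) *
          LinearMap.trace ℂ (Vn n) ↑(((n : ℂ)⁻¹ • (1 : Vn n →L[ℂ] Vn n)) ∘L diagOp E))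
      = (p : ℂ) := by
  have hcomp : ∀ T : Vn n →L[ℂ] Vn n,
      LinearMap.trace ℂ (Vn n) ↑(((n : ℂ)⁻¹ • (1 : Vn n →L[ℂ] Vn n)) ∘L T)
        = (n : ℂ)⁻¹ * LinearMap.trace ℂ (Vn n) ↑T := by
    intro T
    rw [ContinuousLinearMap.smul_comp, ContinuousLinearMap.one_def, ContinuousLinearMap.id_comp,
      ContinuousLinearMap.coe_smul, _root_.map_smul, smul_eq_mul]
  rw [hcomp, hcomp, trace_diag]
  set c := LinearMap.trace ℂ (Vn n) ↑E with hc
  have hn0 : (n : ℂ) ≠ 0 := Nat.cast_ne_zero.mpr (by omega)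
  have hx : (n : ℂ)⁻¹ * c ≠ 0 := mul_ne_zero (inv_ne_zero hn0) htr
  have h1 : ((1 - p : ℝ) : ℂ) = 1 - (p : ℂ) := by push_cast; ring
  rw [h1]
  field_simp
  have hd : (1 - (p:ℂ)) * c + (p:ℂ) * c = c := by ring
  ring
end
end

section
/- (Helstrom, Proposition 5, maximal value.) Let A be a self-adjoint operator on a finite-dimensional complex Hilbert space H. Then the maximum of tr(E·A) over all operators E with 0 ≤ E ≤ I equals the sum of the positive eigenvalues of A counted with multiplicity, i.e., equals tr(A⁺) where A⁺ is the positive part of A; and this maximum is attained at E = P₊(A), the orthogonal projection onto the span of all eigenvectors of A with positive eigenvalues. -/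
open scoped InnerProductSpace
open Finset

section Helpers
variable {H : Type*} [NormedAddCommGroup H] [InnerProductSpace ℂ H] [FiniteDimensional ℂ H]

lemma trace_clm (T : H →L[ℂ] H) :
    LinearMap.trace ℂ H ↑T
      = ∑ i, ⟪(stdOrthonormalBasis ℂ H) i, T ((stdOrthonormalBasis ℂ H) i)⟫_ℂ := by
  rw [LinearMap.trace_eq_matrix_trace ℂ (stdOrthonormalBasis ℂ H).toBasis, Matrix.trace]
  simp [Matrix.diag, LinearMap.toMatrix_apply, OrthonormalBasis.coe_toBasis_repr_apply,
    OrthonormalBasis.repr_apply_apply]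

lemma trace_re_nonneg {T : H →L[ℂ] H} (hT : T.IsPositive) :
    0 ≤ (LinearMap.trace ℂ H ↑T).re := by
  rw [trace_clm, Complex.re_sum]
  exact Finset.sum_nonneg fun i _ => (RCLike.nonneg_iff.mp (hT.inner_nonneg_right _)).1

lemma idem_sa_pos {T : H →L[ℂ] H} (hsa : IsSelfAdjoint T) (hid : T ∘L T = T) :
    T.IsPositive := by
  refine ContinuousLinearMap.isPositive_def'.mpr ⟨hsa, fun x => ?_⟩
  rw [ContinuousLinearMap.reApplyInnerSelf]
  have : ⟪T x, x⟫_ℂ = ⟪T x, T x⟫_ℂ := by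
    conv_lhs => rw [← hid]
    rw [ContinuousLinearMap.comp_apply, ← ContinuousLinearMap.adjoint_inner_left,
      ContinuousLinearMap.isSelfAdjoint_iff'.mp hsa]
  rw [this, inner_self_eq_norm_sq]
  positivity

lemma trace_conj_proj (E Q : H →L[ℂ] H) (hid : Q ∘L Q = Q) :
    LinearMap.trace ℂ H ↑(E ∘L Q) = LinearMap.trace ℂ H ↑(Q ∘L (E ∘L Q)) := by
  simp only [ContinuousLinearMap.toLinearMap_comp]
  have h2 : (Q : H →ₗ[ℂ] H) ∘ₗ (Q : H →ₗ[ℂ] H) = (Q : H →ₗ[ℂ] H) := by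
    rw [← ContinuousLinearMap.toLinearMap_comp, hid]
  conv_rhs => rw [LinearMap.trace_comp_comm', LinearMap.comp_assoc, h2]

lemma trace_re_comp_nonneg {E : H →L[ℂ] H} (hE : E.IsPositive) {Q : H →L[ℂ] H}
    (hsa : IsSelfAdjoint Q) (hid : Q ∘L Q = Q) :
    0 ≤ (LinearMap.trace ℂ H ↑(E ∘L Q)).re := by
  rw [trace_conj_proj E Q hid]
  have hpos : (Q ∘L (E ∘L Q)).IsPositive := by
    have := hE.adjoint_conj Q
    rwa [ContinuousLinearMap.isSelfAdjoint_iff'.mp hsa] at this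
  exact trace_re_nonneg hpos

end Helpers

/-- (Helstrom; Proposition 5, maximal value.) Let `A` be a self-adjoint operator on a
finite-dimensional complex Hilbert space, with spectral decomposition
`A = ∑ⱼ λⱼ Pⱼ` (the `Pⱼ` mutually orthogonal projections summing to `I`). Then the set
of values `tr(E·A)` over all operators `0 ≤ E ≤ I` has greatest element
`tr(A⁺) = ∑_{j : λⱼ>0} λⱼ tr(Pⱼ)` (the sum of the positive eigenvalues of `A` with
multiplicity), and this maximum is attained at `E = P₊(A) = ∑_{j : λⱼ>0} Pⱼ`, the
projection onto the span of the eigenvectors with positive eigenvalues. -/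
theorem stmt_11
    {H : Type*} [NormedAddCommGroup H] [InnerProductSpace ℂ H] [FiniteDimensional ℂ H]
    (A : H →L[ℂ] H) (hA : IsSelfAdjoint A)
    (m : ℕ) (lam : Fin m → ℝ) (P : Fin m → H →L[ℂ] H)
    (hPsa : ∀ j, IsSelfAdjoint (P j))
    (hPidem : ∀ j, P j ∘L P j = P j)
    (hPorth : ∀ i j, i ≠ j → P i ∘L P j = 0)
    (hPsum : ∑ j, P j = 1)
    (hspec : A = ∑ j, (lam j : ℂ) • P j) :
    IsGreatest
      {x : ℝ | ∃ E : H →L[ℂ] H, (E.IsPositive ∧ (1 - E).IsPositive) ∧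
        x = (LinearMap.trace ℂ H ↑(E ∘L A)).re}
      ((LinearMap.trace ℂ H
        ↑(∑ j ∈ univ.filter (fun j => 0 < lam j), (lam j : ℂ) • P j)).re)
    ∧ (LinearMap.trace ℂ H
        ↑((∑ j ∈ univ.filter (fun j => 0 < lam j), P j) ∘L A)).re
      = (LinearMap.trace ℂ H
        ↑(∑ j ∈ univ.filter (fun j => 0 < lam j), (lam j : ℂ) • P j)).re := by
  set S : Finset (Fin m) := univ.filter (fun j => 0 < lam j) with hS
  -- sums of the P's over subsets are selfadjoint idempotents
  have hsum_sa : ∀ s : Finset (Fin m), IsSelfAdjoint (∑ j ∈ s, P j) := by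
    intro s
    rw [IsSelfAdjoint, star_sum]
    exact Finset.sum_congr rfl fun j _ => hPsa j
  have hsum_idem : ∀ s : Finset (Fin m), (∑ j ∈ s, P j) ∘L (∑ j ∈ s, P j) = ∑ j ∈ s, P j := by
    intro s
    rw [← ContinuousLinearMap.mul_def, Finset.sum_mul_sum]
    rw [Finset.sum_congr rfl (fun i hi => Finset.sum_eq_single_of_mem i hi
      (fun j _ hji => by rw [ContinuousLinearMap.mul_def, hPorth i j (Ne.symm hji)]) )]
    · exact Finset.sum_congr rfl fun i _ => by rw [ContinuousLinearMap.mul_def, hPidem i]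
  -- composition identity
  have hcomp : ∀ s : Finset (Fin m),
      (∑ j ∈ s, P j) ∘L A = ∑ j ∈ s, (lam j : ℂ) • P j := by
    intro s
    rw [hspec, ← ContinuousLinearMap.mul_def, Finset.sum_mul]
    refine Finset.sum_congr rfl fun j hj => ?_
    rw [Finset.mul_sum]
    rw [Finset.sum_eq_single_of_mem j (Finset.mem_univ j)
      (fun i _ hij => by
        rw [mul_smul_comm, ContinuousLinearMap.mul_def, hPorth j i (Ne.symm hij), smul_zero])]
    rw [mul_smul_comm, ContinuousLinearMap.mul_def, hPidem j]
  -- trace of E ∘ A decomposes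
  have htr : ∀ E : H →L[ℂ] H,
      (LinearMap.trace ℂ H ↑(E ∘L A)).re
        = ∑ j, lam j * (LinearMap.trace ℂ H ↑(E ∘L P j)).re := by
    intro E
    have : E ∘L A = ∑ j, (lam j : ℂ) • (E ∘L P j) := by
      rw [hspec, ← ContinuousLinearMap.mul_def, Finset.mul_sum]
      exact Finset.sum_congr rfl fun j _ => by
        rw [mul_smul_comm, ContinuousLinearMap.mul_def]
    rw [this]
    push_cast [ContinuousLinearMap.coe_sum, ContinuousLinearMap.coe_smul, map_sum, map_smul,
      Complex.re_sum]
    exact Finset.sum_congr rfl fun j _ => by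
      simp [smul_eq_mul, Complex.re_ofReal_mul, ← ContinuousLinearMap.coe_comp]
  -- RHS value
  have hval : (LinearMap.trace ℂ H ↑(∑ j ∈ S, (lam j : ℂ) • P j)).re
      = ∑ j ∈ S, lam j * (LinearMap.trace ℂ H ↑(P j)).re := by
    push_cast [ContinuousLinearMap.coe_sum, ContinuousLinearMap.coe_smul, map_sum, map_smul,
      Complex.re_sum]
    exact Finset.sum_congr rfl fun j _ => by rw [smul_eq_mul, Complex.re_ofReal_mul]
  have hsecond : (LinearMap.trace ℂ H ↑((∑ j ∈ S, P j) ∘L A)).re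
      = (LinearMap.trace ℂ H ↑(∑ j ∈ S, (lam j : ℂ) • P j)).re := by
    rw [hcomp S]
  refine ⟨⟨?_, ?_⟩, hsecond⟩
  · -- membership: E = ∑_{j∈S} P j
    refine ⟨∑ j ∈ S, P j, ⟨idem_sa_pos (hsum_sa S) (hsum_idem S), ?_⟩, hsecond.symm⟩
    have h1 : (1 : H →L[ℂ] H) - ∑ j ∈ S, P j = ∑ j ∈ Sᶜ, P j := by
      rw [← hPsum, ← Finset.sum_compl_add_sum S P]
      abel
    rw [h1]
    exact idem_sa_pos (hsum_sa Sᶜ) (hsum_idem Sᶜ)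
  · -- upper bound
    rintro x ⟨E, ⟨hE, hE1⟩, rfl⟩
    rw [htr E, hval]
    have ht0 : ∀ j, 0 ≤ (LinearMap.trace ℂ H ↑(E ∘L P j)).re := fun j =>
      trace_re_comp_nonneg hE (hPsa j) (hPidem j)
    have ht1 : ∀ j, (LinearMap.trace ℂ H ↑(E ∘L P j)).re
        ≤ (LinearMap.trace ℂ H ↑(P j)).re := by
      intro j
      have h0 := trace_re_comp_nonneg hE1 (hPsa j) (hPidem j)
      have : (1 - E) ∘L P j = P j - E ∘L P j := by
        rw [ContinuousLinearMap.sub_comp, ContinuousLinearMap.one_def,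
          ContinuousLinearMap.id_comp]
      rw [this] at h0
      push_cast [ContinuousLinearMap.coe_sub, map_sub, Complex.sub_re] at h0
      rw [← ContinuousLinearMap.toLinearMap_comp] at h0
      linarith
    calc ∑ j, lam j * (LinearMap.trace ℂ H ↑(E ∘L P j)).re
        = ∑ j ∈ S, lam j * (LinearMap.trace ℂ H ↑(E ∘L P j)).re
          + ∑ j ∈ Sᶜ, lam j * (LinearMap.trace ℂ H ↑(E ∘L P j)).re := by
          rw [Finset.sum_add_sum_compl]
      _ ≤ ∑ j ∈ S, lam j * (LinearMap.trace ℂ H ↑(P j)).re + 0 := by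
          gcongr ?_ + ?_
          · refine Finset.sum_le_sum fun j hj => ?_
            have hjpos : 0 < lam j := (Finset.mem_filter.mp hj).2
            exact mul_le_mul_of_nonneg_left (ht1 j) hjpos.le
          · refine Finset.sum_nonpos fun j hj => ?_
            have : ¬ 0 < lam j := by
              simpa [hS] using Finset.mem_compl.mp hj
            exact mul_nonpos_of_nonpos_of_nonneg (not_lt.mp this) (ht0 j)
      _ = ∑ j ∈ S, lam j * (LinearMap.trace ℂ H ↑(P j)).re := add_zero _
end

section
/- (Helstrom, Proposition 5, characterization of optimizers.) Let A be a self-adjoint operator on a finite-dimensional complex Hilbert space H, and let E be an operator with 0 ≤ E ≤ I. Then tr(E·A) equals its maximal value tr(A⁺) if and only if P₊(A) ≤ E ≤ P₊(A) + P₀(A); equivalently, if and only if E v = v for every eigenvector v of A with positive eigenvalue and E v = 0 for every eigenvector v of A with negative eigenvalue. In particular, if 0 is not an eigenvalue of A, the optimizer E = P₊(A) is unique. -/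
open scoped InnerProductSpace
open Finset

namespace Stmt12Aux

open ContinuousLinearMap

variable {H : Type*} [NormedAddCommGroup H] [InnerProductSpace ℂ H] [FiniteDimensional ℂ H]

set_option synthInstance.maxHeartbeats 1000000 in
lemma posApply (T : H →L[ℂ] H) (hT : T.IsPositive) (x : H) (hx : (⟪x, T x⟫_ℂ).re = 0) :
    T x = 0 := by
  have h0 : (0:H→L[ℂ]H) ≤ T := (nonneg_iff_isPositive T).mpr hT
  have hss : CFC.sqrt T * CFC.sqrt T = T := CFC.sqrt_mul_sqrt_self T h0
  have hs : (0:H→L[ℂ]H) ≤ CFC.sqrt T := CFC.sqrt_nonneg T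
  have hsa : IsSelfAdjoint (CFC.sqrt T) := IsSelfAdjoint.of_nonneg hs
  have h1 : ⟪x, T x⟫_ℂ = ⟪CFC.sqrt T x, CFC.sqrt T x⟫_ℂ := by
    conv_lhs => rw [← hss]
    rw [mul_apply_eq_comp]
    exact ((isSelfAdjoint_iff_isSymmetric.mp hsa) x (CFC.sqrt T x)).symm
  have h2 : CFC.sqrt T x = 0 := by
    rw [h1] at hx
    have h3 : RCLike.re ⟪CFC.sqrt T x, CFC.sqrt T x⟫_ℂ = 0 := hx
    rw [inner_self_eq_norm_sq] at h3
    exact norm_eq_zero.mp (pow_eq_zero_iff (n := 2) (by norm_num) |>.mp h3)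
  calc T x = (CFC.sqrt T * CFC.sqrt T) x := by rw [hss]
  _ = 0 := by rw [mul_apply_eq_comp, h2, map_zero]

lemma trace_inner (T : H →L[ℂ] H) :
    LinearMap.trace ℂ H ↑T
      = ∑ i, ⟪(stdOrthonormalBasis ℂ H) i, T ((stdOrthonormalBasis ℂ H) i)⟫_ℂ := by
  set b := stdOrthonormalBasis ℂ H
  rw [LinearMap.trace_eq_matrix_trace ℂ b.toBasis, Matrix.trace]
  congr 1
  ext i
  rw [Matrix.diag_apply, LinearMap.toMatrix_apply, b.coe_toBasis, b.coe_toBasis_repr_apply,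
    b.repr_apply_apply]
  rfl

lemma trace_re_nonneg (T : H →L[ℂ] H) (hT : T.IsPositive) :
    0 ≤ (LinearMap.trace ℂ H ↑T).re := by
  rw [trace_inner, Complex.re_sum]
  exact Finset.sum_nonneg fun i _ => hT.re_inner_nonneg_right _

lemma eq_zero_of_trace_re_eq_zero (T : H →L[ℂ] H) (hT : T.IsPositive)
    (h : (LinearMap.trace ℂ H ↑T).re = 0) : T = 0 := by
  rw [trace_inner, Complex.re_sum] at h
  have hz : ∀ i ∈ Finset.univ, (⟪(stdOrthonormalBasis ℂ H) i,
      T ((stdOrthonormalBasis ℂ H) i)⟫_ℂ).re = 0 :=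
    (Finset.sum_eq_zero_iff_of_nonneg fun i _ => hT.re_inner_nonneg_right _).mp h
  have hTb : ∀ i, T ((stdOrthonormalBasis ℂ H) i) = 0 := fun i =>
    posApply T hT _ (hz i (Finset.mem_univ i))
  have : (↑T : H →ₗ[ℂ] H) = ↑(0 : H →L[ℂ] H) :=
    (stdOrthonormalBasis ℂ H).toBasis.ext fun i => by
      simp only [OrthonormalBasis.coe_toBasis, ContinuousLinearMap.coe_coe]
      rw [hTb i]; rfl
  exact ContinuousLinearMap.coe_injective this

omit [FiniteDimensional ℂ H] in
lemma trace_comp_comm (S T : H →L[ℂ] H) :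
    LinearMap.trace ℂ H ↑(S ∘L T) = LinearMap.trace ℂ H ↑(T ∘L S) := by
  rw [ContinuousLinearMap.toLinearMap_comp, ContinuousLinearMap.toLinearMap_comp,
    ← Module.End.mul_eq_comp, ← Module.End.mul_eq_comp]
  exact LinearMap.trace_mul_comm ℂ _ _

lemma conj_isPositive (T S : H →L[ℂ] H) (hT : T.IsPositive) (hS : IsSelfAdjoint S) :
    (S ∘L T ∘L S).IsPositive := by
  have := hT.conj_adjoint S
  rwa [ContinuousLinearMap.isSelfAdjoint_iff'.mp hS] at this

end Stmt12Aux

open Stmt12Aux ContinuousLinearMap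

set_option maxHeartbeats 2000000 in
/-- (Helstrom; Proposition 5, characterization of optimizers.) Let `A` be a self-adjoint
operator on a finite-dimensional complex Hilbert space with spectral decomposition
`A = ∑ⱼ λⱼ Pⱼ`, and let `0 ≤ E ≤ I`. Then `tr(E·A)` equals its maximal value
`tr(A⁺)` if and only if `P₊(A) ≤ E ≤ P₊(A) + P₀(A)` (where `B ≤ C` means `C - B` is
positive semidefinite, `P₊(A)` projects onto the span of eigenvectors with positive
eigenvalues and `P₀(A)` onto the kernel); equivalently, if and only if `E v = v` for
every eigenvector `v` of `A` with positive eigenvalue and `E v = 0` for every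
eigenvector with negative eigenvalue. In particular, if `0` is not an eigenvalue of
`A` then the optimizer `E = P₊(A)` is unique. -/
theorem stmt_12
    {H : Type*} [NormedAddCommGroup H] [InnerProductSpace ℂ H] [FiniteDimensional ℂ H]
    (A : H →L[ℂ] H) (hA : IsSelfAdjoint A)
    (m : ℕ) (lam : Fin m → ℝ) (P : Fin m → H →L[ℂ] H)
    (hPsa : ∀ j, IsSelfAdjoint (P j))
    (hPidem : ∀ j, P j ∘L P j = P j)
    (hPorth : ∀ i j, i ≠ j → P i ∘L P j = 0)
    (hPsum : ∑ j, P j = 1)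
    (hspec : A = ∑ j, (lam j : ℂ) • P j)
    (E : H →L[ℂ] H) (hE : E.IsPositive ∧ (1 - E).IsPositive) :
    ((LinearMap.trace ℂ H ↑(E ∘L A)).re
        = (LinearMap.trace ℂ H
            ↑(∑ j ∈ univ.filter (fun j => 0 < lam j), (lam j : ℂ) • P j)).re
      ↔ (E - ∑ j ∈ univ.filter (fun j => 0 < lam j), P j).IsPositive
        ∧ ((∑ j ∈ univ.filter (fun j => 0 < lam j), P j)
            + (∑ j ∈ univ.filter (fun j => lam j = 0), P j) - E).IsPositive)
    ∧ ((LinearMap.trace ℂ H ↑(E ∘L A)).re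
        = (LinearMap.trace ℂ H
            ↑(∑ j ∈ univ.filter (fun j => 0 < lam j), (lam j : ℂ) • P j)).re
      ↔ (∀ (c : ℝ) (v : H), 0 < c → v ≠ 0 → A v = (c : ℂ) • v → E v = v)
        ∧ (∀ (c : ℝ) (v : H), c < 0 → v ≠ 0 → A v = (c : ℂ) • v → E v = 0))
    ∧ ((∀ v : H, A v = 0 → v = 0) →
        ((LinearMap.trace ℂ H ↑(E ∘L A)).re
          = (LinearMap.trace ℂ H
              ↑(∑ j ∈ univ.filter (fun j => 0 < lam j), (lam j : ℂ) • P j)).re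
          → E = ∑ j ∈ univ.filter (fun j => 0 < lam j), P j)) := by
  obtain ⟨hEpos, hE1pos⟩ := hE
  -- composition facts
  have hsumP : ∀ (s : Finset (Fin m)) j, (∑ k ∈ s, P k) ∘L P j = if j ∈ s then P j else 0 := by
    intro s j
    rw [ContinuousLinearMap.finset_sum_comp]
    rw [show (∑ k ∈ s, P k ∘L P j) = ∑ k ∈ s, if k = j then P j else 0 from
      Finset.sum_congr rfl fun k _ => by
        by_cases h : k = j
        · subst h; simp [hPidem k]
        · simp [h, hPorth k j h]]
    simp
  have hPsum' : ∀ (s : Finset (Fin m)) j, P j ∘L (∑ k ∈ s, P k) = if j ∈ s then P j else 0 := by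
    intro s j
    rw [ContinuousLinearMap.comp_finset_sum]
    rw [show (∑ k ∈ s, P j ∘L P k) = ∑ k ∈ s, if k = j then P j else 0 from
      Finset.sum_congr rfl fun k _ => by
        by_cases h : k = j
        · subst h; simp [hPidem k]
        · simp [h, hPorth j k (Ne.symm h)]]
    simp
  have hAP : ∀ j, A ∘L P j = (lam j : ℂ) • P j := by
    intro j
    rw [hspec, ContinuousLinearMap.finset_sum_comp]
    rw [show (∑ k, ((lam k : ℂ) • P k) ∘L P j) = ∑ k, if k = j then (lam j : ℂ) • P j else 0 from
      Finset.sum_congr rfl fun k _ => by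
        by_cases h : k = j
        · subst h; simp [ContinuousLinearMap.smul_comp, hPidem k]
        · rw [ContinuousLinearMap.smul_comp, hPorth k j h]; simp [h]]
    simp
  have hPA : ∀ j, P j ∘L A = (lam j : ℂ) • P j := by
    intro j
    rw [hspec, ContinuousLinearMap.comp_finset_sum]
    rw [show (∑ k, P j ∘L ((lam k : ℂ) • P k)) = ∑ k, if k = j then (lam j : ℂ) • P j else 0 from
      Finset.sum_congr rfl fun k _ => by
        by_cases h : k = j
        · subst h; simp [ContinuousLinearMap.comp_smul, hPidem k]
        · rw [ContinuousLinearMap.comp_smul, hPorth j k (Ne.symm h)]; simp [h]]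
    simp
  -- trace expansion
  have htss : ∀ (s : Finset (Fin m)) (T : Fin m → H →L[ℂ] H),
      (LinearMap.trace ℂ H ↑(∑ j ∈ s, (lam j : ℂ) • T j)).re
        = ∑ j ∈ s, lam j * (LinearMap.trace ℂ H ↑(T j)).re := by
    intro s T
    rw [ContinuousLinearMap.coe_sum, map_sum, Complex.re_sum]
    exact Finset.sum_congr rfl fun j _ => by
      rw [ContinuousLinearMap.coe_smul, map_smul, smul_eq_mul, Complex.re_ofReal_mul]
  have hcompsum : E ∘L A = ∑ j, (lam j : ℂ) • (E ∘L P j) := by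
    rw [hspec, ContinuousLinearMap.comp_finset_sum]
    exact Finset.sum_congr rfl fun j _ => by rw [ContinuousLinearMap.comp_smul]
  have hEA : (LinearMap.trace ℂ H ↑(E ∘L A)).re
      = ∑ j, lam j * (LinearMap.trace ℂ H ↑(E ∘L P j)).re := by
    rw [hcompsum]; exact htss _ _
  have hApt : (LinearMap.trace ℂ H
      ↑(∑ j ∈ univ.filter (fun j => 0 < lam j), (lam j : ℂ) • P j)).re
      = ∑ j ∈ univ.filter (fun j => 0 < lam j), lam j * (LinearMap.trace ℂ H ↑(P j)).re :=
    htss _ _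
  -- per-j trace facts
  have htEP : ∀ (F : H →L[ℂ] H) j,
      LinearMap.trace ℂ H ↑(P j ∘L (F ∘L P j)) = LinearMap.trace ℂ H ↑(F ∘L P j) := by
    intro F j
    rw [trace_comp_comm (P j) (F ∘L P j), ContinuousLinearMap.comp_assoc, hPidem j]
  have hPEPpos : ∀ (F : H →L[ℂ] H) j, F.IsPositive → (P j ∘L (F ∘L P j)).IsPositive :=
    fun F j hF => conj_isPositive F (P j) hF (hPsa j)
  have ht_nonneg : ∀ j, 0 ≤ (LinearMap.trace ℂ H ↑(E ∘L P j)).re := by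
    intro j
    rw [← htEP E j]
    exact trace_re_nonneg _ (hPEPpos E j hEpos)
  have hsubcomp : ∀ j, (1 - E) ∘L P j = P j - E ∘L P j := by
    intro j; ext v
    simp [ContinuousLinearMap.sub_apply, ContinuousLinearMap.comp_apply]
  have hpt : ∀ j, (LinearMap.trace ℂ H ↑(P j)).re - (LinearMap.trace ℂ H ↑(E ∘L P j)).re
      = (LinearMap.trace ℂ H ↑(P j ∘L ((1 - E) ∘L P j))).re := by
    intro j
    rw [htEP (1 - E) j, hsubcomp j, ContinuousLinearMap.coe_sub, map_sub, Complex.sub_re]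
  have hpt_nonneg : ∀ j, 0 ≤ (LinearMap.trace ℂ H ↑(P j)).re
      - (LinearMap.trace ℂ H ↑(E ∘L P j)).re := by
    intro j
    rw [hpt j]
    exact trace_re_nonneg _ (hPEPpos (1 - E) j hE1pos)
  -- the central condition
  have hsymmP : ∀ j (v w : H), ⟪P j v, w⟫_ℂ = ⟪v, P j w⟫_ℂ :=
    fun j => isSelfAdjoint_iff_isSymmetric.mp (hPsa j)
  have key₁ : (LinearMap.trace ℂ H ↑(E ∘L A)).re
      = (LinearMap.trace ℂ H
          ↑(∑ j ∈ univ.filter (fun j => 0 < lam j), (lam j : ℂ) • P j)).re →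
      (∀ j, 0 < lam j → E ∘L P j = P j) ∧ (∀ j, lam j < 0 → E ∘L P j = 0) := by
    intro htr
    rw [hEA, hApt] at htr
    set t : Fin m → ℝ := fun j => (LinearMap.trace ℂ H ↑(E ∘L P j)).re with ht
    set p : Fin m → ℝ := fun j => (LinearMap.trace ℂ H ↑(P j)).re with hp
    have hg_nonneg : ∀ j ∈ (univ : Finset (Fin m)),
        0 ≤ (if 0 < lam j then lam j * p j else 0) - lam j * t j := by
      intro j _
      by_cases h : 0 < lam j
      · rw [if_pos h, ← mul_sub]
        exact mul_nonneg h.le (hpt_nonneg j)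
      · rw [if_neg h, zero_sub, neg_nonneg]
        exact mul_nonpos_of_nonpos_of_nonneg (not_lt.mp h) (ht_nonneg j)
    have hg_sum : ∑ j, ((if 0 < lam j then lam j * p j else 0) - lam j * t j) = 0 := by
      rw [Finset.sum_sub_distrib, ← Finset.sum_filter, ← htr, sub_self]
    have hg_zero : ∀ j, (if 0 < lam j then lam j * p j else 0) - lam j * t j = 0 := by
      intro j
      exact (Finset.sum_eq_zero_iff_of_nonneg hg_nonneg).mp hg_sum j (Finset.mem_univ j)
    constructor
    · intro j hj
      have h0 : p j - t j = 0 := by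
        have := hg_zero j
        rw [if_pos hj, ← mul_sub] at this
        exact (mul_eq_zero.mp this).resolve_left (ne_of_gt hj)
      have hzero : P j ∘L ((1 - E) ∘L P j) = 0 := by
        apply eq_zero_of_trace_re_eq_zero _ (hPEPpos (1 - E) j hE1pos)
        rw [← hpt j]; exact h0
      ext v
      have hx : (⟪P j v, (1 - E) (P j v)⟫_ℂ).re = 0 := by
        rw [hsymmP j]
        have : P j ((1 - E) (P j v)) = 0 := by
          have := congrArg (fun (T : H →L[ℂ] H) => T v) hzero
          simpa [ContinuousLinearMap.comp_apply] using this
        rw [this, inner_zero_right]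
        rfl
      have := posApply (1 - E) hE1pos (P j v) hx
      have h2 : P j v - E (P j v) = 0 := by
        simpa [ContinuousLinearMap.sub_apply] using this
      simp only [ContinuousLinearMap.comp_apply]
      exact (sub_eq_zero.mp h2).symm
    · intro j hj
      have h0 : t j = 0 := by
        have := hg_zero j
        rw [if_neg (not_lt.mpr hj.le), zero_sub, neg_eq_zero] at this
        exact (mul_eq_zero.mp this).resolve_left (ne_of_lt hj)
      have hzero : P j ∘L (E ∘L P j) = 0 := by
        apply eq_zero_of_trace_re_eq_zero _ (hPEPpos E j hEpos)
        rw [htEP E j]; exact h0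
      ext v
      have hx : (⟪P j v, E (P j v)⟫_ℂ).re = 0 := by
        rw [hsymmP j]
        have : P j (E (P j v)) = 0 := by
          have := congrArg (fun (T : H →L[ℂ] H) => T v) hzero
          simpa [ContinuousLinearMap.comp_apply] using this
        rw [this, inner_zero_right]
        rfl
      have := posApply E hEpos (P j v) hx
      simpa [ContinuousLinearMap.comp_apply] using this
  have key₂ : (∀ j, 0 < lam j → E ∘L P j = P j) → (∀ j, lam j < 0 → E ∘L P j = 0) →
      (LinearMap.trace ℂ H ↑(E ∘L A)).re
        = (LinearMap.trace ℂ H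
            ↑(∑ j ∈ univ.filter (fun j => 0 < lam j), (lam j : ℂ) • P j)).re := by
    intro hC1 hC2
    rw [hEA, hApt, Finset.sum_filter]
    refine Finset.sum_congr rfl fun j _ => ?_
    rcases lt_trichotomy (lam j) 0 with h | h | h
    · rw [if_neg (asymm h), hC2 j h]
      simp
    · simp [h]
    · rw [if_pos h, hC1 j h]
  -- projections
  set Q : H →L[ℂ] H := ∑ j ∈ univ.filter (fun j => 0 < lam j), P j with hQdef
  set Q0 : H →L[ℂ] H := ∑ j ∈ univ.filter (fun j => lam j = 0), P j with hQ0def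
  set R : H →L[ℂ] H := ∑ j ∈ univ.filter (fun j => lam j < 0), P j with hRdef
  have hQsa : IsSelfAdjoint Q := by
    rw [hQdef, isSelfAdjoint_iff, star_sum]
    exact Finset.sum_congr rfl fun j _ => hPsa j
  have hQ0sa : IsSelfAdjoint Q0 := by
    rw [hQ0def, isSelfAdjoint_iff, star_sum]
    exact Finset.sum_congr rfl fun j _ => hPsa j
  have hRsa : IsSelfAdjoint R := by
    rw [hRdef, isSelfAdjoint_iff, star_sum]
    exact Finset.sum_congr rfl fun j _ => hPsa j
  have hsum_idem : ∀ s : Finset (Fin m),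
      (∑ k ∈ s, P k) ∘L (∑ k ∈ s, P k) = ∑ k ∈ s, P k := by
    intro s
    rw [ContinuousLinearMap.finset_sum_comp]
    exact Finset.sum_congr rfl fun j hj => by rw [hPsum' s j, if_pos hj]
  have hpart : Q + Q0 + R = 1 := by
    rw [hQdef, hQ0def, hRdef, Finset.sum_filter, Finset.sum_filter, Finset.sum_filter,
      ← Finset.sum_add_distrib, ← Finset.sum_add_distrib, ← hPsum]
    refine Finset.sum_congr rfl fun j _ => ?_
    rcases lt_trichotomy (lam j) 0 with h | h | h
    · simp [h, asymm h, ne_of_lt h]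
    · simp [h]
    · simp [h, h.ne', asymm h]
  -- part 1 forward
  have fwd : (∀ j, 0 < lam j → E ∘L P j = P j) → (∀ j, lam j < 0 → E ∘L P j = 0) →
      (E - Q).IsPositive ∧ (Q + Q0 - E).IsPositive := by
    intro hC1 hC2
    have hEQ : E ∘L Q = Q := by
      rw [hQdef, ContinuousLinearMap.comp_finset_sum]
      exact Finset.sum_congr rfl fun j hj =>
        hC1 j (by simpa using (Finset.mem_filter.mp hj).2)
    have hQE : Q ∘L E = Q := by
      have h := congrArg (fun T : H →L[ℂ] H => ContinuousLinearMap.adjoint T) hEQ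
      simp only [ContinuousLinearMap.adjoint_comp,
        ContinuousLinearMap.isSelfAdjoint_iff'.mp hQsa,
        ContinuousLinearMap.isSelfAdjoint_iff'.mp hEpos.isSelfAdjoint] at h
      exact h
    have hER : E ∘L R = 0 := by
      rw [hRdef, ContinuousLinearMap.comp_finset_sum]
      exact Finset.sum_eq_zero fun j hj =>
        hC2 j (by simpa using (Finset.mem_filter.mp hj).2)
    have hRE : R ∘L E = 0 := by
      have h := congrArg (fun T : H →L[ℂ] H => ContinuousLinearMap.adjoint T) hER
      simp only [ContinuousLinearMap.adjoint_comp,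
        ContinuousLinearMap.isSelfAdjoint_iff'.mp hRsa,
        ContinuousLinearMap.isSelfAdjoint_iff'.mp hEpos.isSelfAdjoint, map_zero] at h
      exact h
    have hQidem : Q ∘L Q = Q := by rw [hQdef]; exact hsum_idem _
    have hRidem : R ∘L R = R := by rw [hRdef]; exact hsum_idem _
    have hEQv : ∀ v, E (Q v) = Q v := fun v => by
      have := ContinuousLinearMap.ext_iff.mp hEQ v
      simpa using this
    have hQEv : ∀ v, Q (E v) = Q v := fun v => by
      have := ContinuousLinearMap.ext_iff.mp hQE v
      simpa using this
    have hERv : ∀ v, E (R v) = 0 := fun v => by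
      have := ContinuousLinearMap.ext_iff.mp hER v
      simpa using this
    have hREv : ∀ v, R (E v) = 0 := fun v => by
      have := ContinuousLinearMap.ext_iff.mp hRE v
      simpa using this
    have hQv : ∀ v, Q (Q v) = Q v := fun v => by
      have := ContinuousLinearMap.ext_iff.mp hQidem v
      simpa using this
    have hRv : ∀ v, R (R v) = R v := fun v => by
      have := ContinuousLinearMap.ext_iff.mp hRidem v
      simpa using this
    constructor
    · have hfact : E - Q = (1 - Q) ∘L (E ∘L (1 - Q)) := by
        ext v
        simp only [ContinuousLinearMap.comp_apply, ContinuousLinearMap.sub_apply,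
          ContinuousLinearMap.one_apply, map_sub]
        rw [hEQv v, hQEv v, hQv v]
        abel
      rw [hfact]
      exact conj_isPositive E (1 - Q) hEpos (((IsSelfAdjoint.one (R := H →L[ℂ] H)).sub hQsa))
    · have hQQ0v : ∀ v, Q v + Q0 v = v - R v := by
        intro v
        have := ContinuousLinearMap.ext_iff.mp hpart v
        simp only [ContinuousLinearMap.add_apply, ContinuousLinearMap.one_apply] at this
        exact eq_sub_of_add_eq this
      have hfact2 : Q + Q0 - E = (1 - R) ∘L ((1 - E) ∘L (1 - R)) := by
        ext v
        simp only [ContinuousLinearMap.comp_apply, ContinuousLinearMap.sub_apply,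
          ContinuousLinearMap.add_apply, ContinuousLinearMap.one_apply, map_sub]
        rw [hERv v, hREv v, hRv v, hQQ0v v]
        simp only [map_zero]
        abel
      rw [hfact2]
      exact conj_isPositive (1 - E) (1 - R) hE1pos (((IsSelfAdjoint.one (R := H →L[ℂ] H)).sub hRsa))
  -- part 1 backward
  have bwd : (E - Q).IsPositive → (Q + Q0 - E).IsPositive →
      (∀ j, 0 < lam j → E ∘L P j = P j) ∧ (∀ j, lam j < 0 → E ∘L P j = 0) := by
    intro h1 h2
    constructor
    · intro j hj
      have hQPj : Q ∘L P j = P j := by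
        rw [hQdef, hsumP, if_pos (by simp [hj])]
      ext v
      have hQx : Q (P j v) = P j v := by
        have := ContinuousLinearMap.ext_iff.mp hQPj v
        simpa using this
      have ha : 0 ≤ (⟪P j v, E (P j v)⟫_ℂ).re - (⟪P j v, P j v⟫_ℂ).re := by
        have h' : (⟪P j v, (E - Q) (P j v)⟫_ℂ).re
            = (⟪P j v, E (P j v)⟫_ℂ).re - (⟪P j v, P j v⟫_ℂ).re := by
          rw [ContinuousLinearMap.sub_apply, hQx, inner_sub_right, Complex.sub_re]
        rw [← h']
        exact h1.re_inner_nonneg_right (P j v)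
      have hb : 0 ≤ (⟪P j v, P j v⟫_ℂ).re - (⟪P j v, E (P j v)⟫_ℂ).re := by
        have h' : (⟪P j v, (1 - E) (P j v)⟫_ℂ).re
            = (⟪P j v, P j v⟫_ℂ).re - (⟪P j v, E (P j v)⟫_ℂ).re := by
          rw [ContinuousLinearMap.sub_apply, ContinuousLinearMap.one_apply, inner_sub_right,
            Complex.sub_re]
        rw [← h']
        exact hE1pos.re_inner_nonneg_right (P j v)
      have hz : (⟪P j v, (1 - E) (P j v)⟫_ℂ).re = 0 := by
        rw [ContinuousLinearMap.sub_apply, ContinuousLinearMap.one_apply, inner_sub_right,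
          Complex.sub_re]
        linarith
      have h3 := posApply (1 - E) hE1pos (P j v) hz
      have h4 : P j v - E (P j v) = 0 := by
        simpa [ContinuousLinearMap.sub_apply] using h3
      simp only [ContinuousLinearMap.comp_apply]
      exact (sub_eq_zero.mp h4).symm
    · intro j hj
      have hQPj : Q ∘L P j = 0 := by
        rw [hQdef, hsumP, if_neg (by simp [asymm hj])]
      have hQ0Pj : Q0 ∘L P j = 0 := by
        rw [hQ0def, hsumP, if_neg (by simp [ne_of_lt hj])]
      ext v
      have hQx : Q (P j v) = 0 := by
        have := ContinuousLinearMap.ext_iff.mp hQPj v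
        simpa using this
      have hQ0x : Q0 (P j v) = 0 := by
        have := ContinuousLinearMap.ext_iff.mp hQ0Pj v
        simpa using this
      have ha : 0 ≤ -(⟪P j v, E (P j v)⟫_ℂ).re := by
        have h' : (⟪P j v, (Q + Q0 - E) (P j v)⟫_ℂ).re = -(⟪P j v, E (P j v)⟫_ℂ).re := by
          rw [ContinuousLinearMap.sub_apply, ContinuousLinearMap.add_apply, hQx, hQ0x,
            zero_add, zero_sub, inner_neg_right]
          simp
        rw [← h']
        exact h2.re_inner_nonneg_right (P j v)
      have hb : 0 ≤ (⟪P j v, E (P j v)⟫_ℂ).re := hEpos.re_inner_nonneg_right (P j v)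
      have hz : (⟪P j v, E (P j v)⟫_ℂ).re = 0 := le_antisymm (by linarith) hb
      have h3 := posApply E hEpos (P j v) hz
      simp only [ContinuousLinearMap.comp_apply, ContinuousLinearMap.zero_apply]
      exact h3
  -- part 2: central condition vs eigenvectors
  have eig_of_C : (∀ j, 0 < lam j → E ∘L P j = P j) → (∀ j, lam j < 0 → E ∘L P j = 0) →
      (∀ (c : ℝ) (v : H), 0 < c → v ≠ 0 → A v = (c : ℂ) • v → E v = v)
        ∧ (∀ (c : ℝ) (v : H), c < 0 → v ≠ 0 → A v = (c : ℂ) • v → E v = 0) := by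
    intro hC1 hC2
    have hvdecomp : ∀ v : H, v = ∑ j, P j v := by
      intro v
      have := ContinuousLinearMap.ext_iff.mp hPsum v
      simpa [ContinuousLinearMap.sum_apply] using this.symm
    have hPv : ∀ (c : ℝ) (v : H), A v = (c : ℂ) • v → ∀ j, lam j ≠ c → P j v = 0 := by
      intro c v hAv j hne
      have h1 : P j (A v) = (lam j : ℂ) • P j v := by
        have := ContinuousLinearMap.ext_iff.mp (hPA j) v
        simpa using this
      have h2 : P j (A v) = (c : ℂ) • P j v := by rw [hAv, map_smul]
      have h3 : ((lam j : ℂ) - c) • P j v = 0 := by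
        rw [sub_smul, ← h1, h2, sub_self]
      rcases smul_eq_zero.mp h3 with h | h
      · exact absurd (Complex.ofReal_injective (by exact_mod_cast sub_eq_zero.mp h)) hne
      · exact h
    constructor
    · intro c v hc _ hAv
      conv_lhs => rw [hvdecomp v]
      conv_rhs => rw [hvdecomp v]
      rw [map_sum]
      refine Finset.sum_congr rfl fun j _ => ?_
      by_cases h : lam j = c
      · have hj : 0 < lam j := h ▸ hc
        have := ContinuousLinearMap.ext_iff.mp (hC1 j hj) v
        simpa using this
      · rw [hPv c v hAv j h]
        simp
    · intro c v hc _ hAv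
      conv_lhs => rw [hvdecomp v]
      rw [map_sum]
      refine Finset.sum_eq_zero fun j _ => ?_
      by_cases h : lam j = c
      · have hj : lam j < 0 := h ▸ hc
        have := ContinuousLinearMap.ext_iff.mp (hC2 j hj) v
        simpa using this
      · rw [hPv c v hAv j h]
        simp
  have C_of_eig : (∀ (c : ℝ) (v : H), 0 < c → v ≠ 0 → A v = (c : ℂ) • v → E v = v) →
      (∀ (c : ℝ) (v : H), c < 0 → v ≠ 0 → A v = (c : ℂ) • v → E v = 0) →
      (∀ j, 0 < lam j → E ∘L P j = P j) ∧ (∀ j, lam j < 0 → E ∘L P j = 0) := by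
    intro he1 he2
    have hAx : ∀ j (v : H), A (P j v) = (lam j : ℂ) • P j v := by
      intro j v
      have := ContinuousLinearMap.ext_iff.mp (hAP j) v
      simpa using this
    constructor
    · intro j hj
      ext v
      simp only [ContinuousLinearMap.comp_apply]
      by_cases hx : P j v = 0
      · rw [hx]; simp
      · exact he1 (lam j) (P j v) hj hx (hAx j v)
    · intro j hj
      ext v
      simp only [ContinuousLinearMap.comp_apply, ContinuousLinearMap.zero_apply]
      by_cases hx : P j v = 0
      · rw [hx]; simp
      · exact he2 (lam j) (P j v) hj hx (hAx j v)
  -- assemble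
  refine ⟨?_, ?_, ?_⟩
  · constructor
    · intro h
      obtain ⟨hC1, hC2⟩ := key₁ h
      exact fwd hC1 hC2
    · intro ⟨h1, h2⟩
      obtain ⟨hC1, hC2⟩ := bwd h1 h2
      exact key₂ hC1 hC2
  · constructor
    · intro h
      obtain ⟨hC1, hC2⟩ := key₁ h
      exact eig_of_C hC1 hC2
    · intro ⟨h1, h2⟩
      obtain ⟨hC1, hC2⟩ := C_of_eig h1 h2
      exact key₂ hC1 hC2
  · intro hker htr
    obtain ⟨hC1, hC2⟩ := key₁ htr
    have hP0 : ∀ j, lam j = 0 → P j = 0 := by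
      intro j h0
      ext v
      have hAx : A (P j v) = 0 := by
        have := ContinuousLinearMap.ext_iff.mp (hAP j) v
        simp only [ContinuousLinearMap.comp_apply] at this
        rw [this, h0]
        simp
      simpa using hker _ hAx
    have hstep : E ∘L (∑ j, P j) = Q := by
      rw [ContinuousLinearMap.comp_finset_sum, hQdef, Finset.sum_filter]
      refine Finset.sum_congr rfl fun j _ => ?_
      rcases lt_trichotomy (lam j) 0 with h | h | h
      · rw [hC2 j h, if_neg (asymm h)]
      · rw [hP0 j h]
        simp [h]
      · rw [hC1 j h, if_pos h]
    calc E = E ∘L (∑ j, P j) := by rw [hPsum]; ext v; simp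
    _ = Q := hstep
end

section
/- (Proposition 7.) Let n = 2, let u be the uniform probability measure on the unit sphere of ℂ², and let p ∈ [0,1] be arbitrary. Then for every effect E on ℂ², the set S_E = { ψ ∈ S(ℂ²) : R_ψ(E) > max{p, 1−p} } satisfies u(S_E) ≤ 1/2. -/
open scoped InnerProductSpace
open MeasureTheory Finset

noncomputable section

/-- The map induced on the unit sphere of `ℂⁿ` by a unitary (linear isometric)
transformation `U`. -/
def sphereMap {n : ℕ} (U : Vn n ≃ₗᵢ[ℂ] Vn n)
    (ψ : Metric.sphere (0 : Vn n) 1) : Metric.sphere (0 : Vn n) 1 :=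
  ⟨U ψ, by
    rw [mem_sphere_zero_iff_norm, U.norm_map]
    exact mem_sphere_zero_iff_norm.mp ψ.2⟩

def vec2 (a b : ℂ) : Vn 2 := WithLp.toLp 2 ![a, b]

lemma vec2_apply0 (a b : ℂ) : (vec2 a b) 0 = a := rfl
lemma vec2_apply1 (a b : ℂ) : (vec2 a b) 1 = b := rfl

lemma vec2_eta (x : Vn 2) : vec2 (x 0) (x 1) = x := by
  ext i; fin_cases i <;> rfl

lemma vec2_eq_smul (a b : ℂ) :
    vec2 a b = a • basisVec 2 0 + b • basisVec 2 1 := by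
  ext i; fin_cases i <;>
    simp [vec2, basisVec, EuclideanSpace.single_apply]

lemma norm_vec2_sq (a b : ℂ) :
    ‖vec2 a b‖ ^ 2 = Complex.normSq a + Complex.normSq b := by
  rw [← inner_self_eq_norm_sq (𝕜 := ℂ)]
  simp [vec2, PiLp.inner_apply, Fin.sum_univ_two, RCLike.inner_apply,
    Complex.conj_mul', ← Complex.sq_norm, ← Complex.ofReal_pow, Complex.ofReal_re,
    EuclideanSpace.norm_sq_eq]

lemma inner_E_vec2 (E : Vn 2 →L[ℂ] Vn 2) (a b a' b' : ℂ) :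
    ⟪vec2 a b, E (vec2 a' b')⟫_ℂ =
      (starRingEnd ℂ) a * a' * ⟪basisVec 2 0, E (basisVec 2 0)⟫_ℂ
      + (starRingEnd ℂ) a * b' * ⟪basisVec 2 0, E (basisVec 2 1)⟫_ℂ
      + (starRingEnd ℂ) b * a' * ⟪basisVec 2 1, E (basisVec 2 0)⟫_ℂ
      + (starRingEnd ℂ) b * b' * ⟪basisVec 2 1, E (basisVec 2 1)⟫_ℂ := by
  rw [vec2_eq_smul, vec2_eq_smul]
  simp only [map_add, _root_.map_smul, inner_add_left, inner_add_right,
    inner_smul_left, inner_smul_right]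
  ring

lemma inner_diag_vec2 (E : Vn 2 →L[ℂ] Vn 2) (a b : ℂ) :
    (⟪vec2 a b, diagOp E (vec2 a b)⟫_ℂ).re
      = (⟪basisVec 2 0, E (basisVec 2 0)⟫_ℂ).re * Complex.normSq a
        + (⟪basisVec 2 1, E (basisVec 2 1)⟫_ℂ).re * Complex.normSq b := by
  simp only [diagOp, rankOne, ContinuousLinearMap.sum_apply,
    ContinuousLinearMap.smul_apply, ContinuousLinearMap.add_apply, ContinuousLinearMap.smulRight_apply,
    innerSL_apply_apply, Fin.sum_univ_two, inner_add_right, inner_smul_right]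
  simp only [basisVec, EuclideanSpace.inner_single_left,
    EuclideanSpace.inner_single_right, map_one, one_mul, mul_one]
  rw [vec2_apply0, vec2_apply1]
  simp [Complex.mul_re, Complex.mul_conj', Complex.conj_mul', ← Complex.sq_norm, ← Complex.ofReal_pow, Complex.ofReal_re, Complex.ofReal_im, Complex.sq_norm, Complex.normSq_apply]

/-- the phase `λ` used to cancel cross terms -/
def lam (c : ℂ) : ℂ := if c = 0 then 1 else -(starRingEnd ℂ) c / c

lemma norm_lam (c : ℂ) : ‖lam c‖ = 1 := by
  unfold lam
  split_ifs with h
  · simp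
  · rw [norm_div, norm_neg, RCLike.norm_conj, div_self]
    simpa using h

lemma lam_key (c z : ℂ) : (z * c).re + (lam c * c * (starRingEnd ℂ) z).re = 0 := by
  unfold lam
  split_ifs with h
  · simp [h]
  · have h1 : -(starRingEnd ℂ) c / c * c * (starRingEnd ℂ) z
        = (starRingEnd ℂ) (-(c * z)) := by
      field_simp
      simp only [map_neg, map_mul]
    rw [h1, Complex.conj_re, Complex.neg_re]
    ring_nf

/-- The unitary `(a, b) ↦ (b, l * a)` for a unit scalar `l`. -/
def swapPhase (l : ℂ) (hl : ‖l‖ = 1) : Vn 2 ≃ₗᵢ[ℂ] Vn 2 where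
  toFun x := vec2 (x 1) (l * x 0)
  invFun x := vec2 ((starRingEnd ℂ) l * x 1) (x 0)
  map_add' x y := by
    ext i; fin_cases i <;> simp [vec2] <;> ring
  map_smul' c x := by
    ext i; fin_cases i <;> simp [vec2] <;> ring
  left_inv x := by
    ext i
    have : (starRingEnd ℂ) l * l = 1 := by
      rw [Complex.conj_mul']
      norm_cast
      simp [hl]
    fin_cases i <;> simp [vec2, ← mul_assoc, this]
  right_inv x := by
    ext i
    have : l * (starRingEnd ℂ) l = 1 := by
      rw [Complex.mul_conj']
      norm_cast
      simp [hl]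
    fin_cases i <;> simp [vec2, ← mul_assoc, this]
  norm_map' x := by
    have h0 : ‖vec2 (x 1) (l * x 0)‖ ^ 2 = ‖x‖ ^ 2 := by
      rw [norm_vec2_sq, ← vec2_eta x, norm_vec2_sq, vec2_apply0, vec2_apply1,
        Complex.normSq_mul]
      have : Complex.normSq l = 1 := by
        rw [← Complex.sq_norm]; simp [hl]
      rw [this]; ring
    have := congrArg Real.sqrt h0
    simpa [Real.sqrt_sq, norm_nonneg] using this

lemma swapPhase_apply (l : ℂ) (hl : ‖l‖ = 1) (x : Vn 2) :
    swapPhase l hl x = vec2 (x 1) (l * x 0) := rfl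

lemma inner_one_sub_re (E : Vn 2 →L[ℂ] Vn 2) (x : Vn 2) :
    (⟪x, (1 - E) x⟫_ℂ).re = ‖x‖ ^ 2 - (⟪x, E x⟫_ℂ).re := by
  rw [ContinuousLinearMap.sub_apply, ContinuousLinearMap.one_apply,
    inner_sub_right, Complex.sub_re, ← inner_self_eq_norm_sq (𝕜 := ℂ)]
  rfl

lemma complex_quad (e₀ e₁ c a b : ℂ) :
    ((starRingEnd ℂ) a * a * e₀ + (starRingEnd ℂ) a * b * c
      + (starRingEnd ℂ) b * a * (starRingEnd ℂ) c + (starRingEnd ℂ) b * b * e₁).re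
    = e₀.re * Complex.normSq a + e₁.re * Complex.normSq b
      + 2 * ((starRingEnd ℂ) a * b * c).re := by
  simp [Complex.add_re, Complex.mul_re, Complex.conj_re, Complex.conj_im,
    Complex.normSq_apply]
  ring

lemma normSq_lam (c : ℂ) : Complex.normSq (lam c) = 1 := by
  rw [← Complex.sq_norm]
  simp [norm_lam]

lemma key_ineq (p : ℝ) (hp : p ∈ Set.Icc (0 : ℝ) 1) (E : Vn 2 →L[ℂ] Vn 2)
    (hE : IsEffect E) (ψ : Vn 2) (hψ : ‖ψ‖ = 1) :
    reliability p E ψ +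
      reliability p E
        (swapPhase (lam ⟪basisVec 2 0, E (basisVec 2 1)⟫_ℂ)
          (norm_lam _) ψ) ≤ 2 * max p (1 - p) := by
  set c : ℂ := ⟪basisVec 2 0, E (basisVec 2 1)⟫_ℂ with hcdef
  set r₀ : ℝ := (⟪basisVec 2 0, E (basisVec 2 0)⟫_ℂ).re with hr0
  set r₁ : ℝ := (⟪basisVec 2 1, E (basisVec 2 1)⟫_ℂ).re with hr1
  have hsym : ⟪basisVec 2 1, E (basisVec 2 0)⟫_ℂ = (starRingEnd ℂ) c := by
    rw [hcdef, ← inner_conj_symm]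
    exact congrArg _ (hE.1.1 (basisVec 2 0) (basisVec 2 1))
  have hb0 : ‖basisVec 2 0‖ = 1 := by simp [basisVec]
  have hb1 : ‖basisVec 2 1‖ = 1 := by simp [basisVec]
  have hr0n : 0 ≤ r₀ := hE.1.re_inner_nonneg_right _
  have hr1n : 0 ≤ r₁ := hE.1.re_inner_nonneg_right _
  have hr0u : r₀ ≤ 1 := by
    have h : (0:ℝ) ≤ (⟪basisVec 2 0, (1 - E) (basisVec 2 0)⟫_ℂ).re :=
      hE.2.re_inner_nonneg_right _
    rw [inner_one_sub_re, hb0] at h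
    linarith
  have hr1u : r₁ ≤ 1 := by
    have h : (0:ℝ) ≤ (⟪basisVec 2 1, (1 - E) (basisVec 2 1)⟫_ℂ).re :=
      hE.2.re_inner_nonneg_right _
    rw [inner_one_sub_re, hb1] at h
    linarith
  obtain ⟨hp0, hp1⟩ := hp
  set a : ℂ := ψ 0 with hadef
  set b : ℂ := ψ 1 with hbdef
  have hψv : ψ = vec2 a b := (vec2_eta ψ).symm
  have hns : Complex.normSq a + Complex.normSq b = 1 := by
    have := norm_vec2_sq a b
    rw [← hψv, hψ] at this
    linarith [this.symm]
  have hU : swapPhase (lam c) (norm_lam c) ψ = vec2 b (lam c * a) := by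
    rw [swapPhase_apply, ← hadef, ← hbdef]
  have hQ1 : (⟪vec2 a b, E (vec2 a b)⟫_ℂ).re
      = r₀ * Complex.normSq a + r₁ * Complex.normSq b
        + 2 * ((starRingEnd ℂ) a * b * c).re := by
    rw [inner_E_vec2, hsym, ← hcdef, complex_quad]
  have hQ2 : (⟪vec2 b (lam c * a), E (vec2 b (lam c * a))⟫_ℂ).re
      = r₀ * Complex.normSq b + r₁ * Complex.normSq a
        + 2 * ((starRingEnd ℂ) b * (lam c * a) * c).re := by
    rw [inner_E_vec2, hsym, ← hcdef, complex_quad, Complex.normSq_mul,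
      normSq_lam, one_mul]
  have hcross : ((starRingEnd ℂ) a * b * c).re
      + ((starRingEnd ℂ) b * (lam c * a) * c).re = 0 := by
    have h := lam_key c ((starRingEnd ℂ) a * b)
    have h2 : (starRingEnd ℂ) b * (lam c * a) * c
        = lam c * c * (starRingEnd ℂ) ((starRingEnd ℂ) a * b) := by
      simp only [map_mul, Complex.conj_conj]
      ring
    rw [h2]
    linarith [h]
  have hnla : Complex.normSq (lam c * a) = Complex.normSq a := by
    rw [Complex.normSq_mul, normSq_lam, one_mul]
  have hnsU : ‖vec2 b (lam c * a)‖ ^ 2 = 1 := by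
    rw [norm_vec2_sq, hnla]; linarith
  have hnorm : ‖vec2 a b‖ ^ 2 = 1 := by rw [← hψv, hψ, one_pow]
  unfold reliability
  rw [hU, inner_one_sub_re, inner_one_sub_re, hnsU, hψv, hnorm,
    inner_diag_vec2, inner_diag_vec2, hQ1, hQ2]
  rw [← hr0, ← hr1, hnla]
  have hsum : p * (r₀ * Complex.normSq a + r₁ * Complex.normSq b) +
      (1 - p) * (1 - (r₀ * Complex.normSq a + r₁ * Complex.normSq b
        + 2 * ((starRingEnd ℂ) a * b * c).re)) +
      (p * (r₀ * Complex.normSq b + r₁ * Complex.normSq a) +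
        (1 - p) * (1 - (r₀ * Complex.normSq b + r₁ * Complex.normSq a
          + 2 * ((starRingEnd ℂ) b * (lam c * a) * c).re)))
      = p * (r₀ + r₁) + (1 - p) * (2 - (r₀ + r₁)) := by
    linear_combination (2 * p - 1) * (r₀ + r₁) * hns - 2 * (1 - p) * hcross
  rw [hsum]
  rcases le_total p (1 - p) with h | h
  · rw [max_eq_right h]
    nlinarith [mul_nonneg (add_nonneg hr0n hr1n) (by linarith : (0:ℝ) ≤ 1 - 2 * p)]
  · rw [max_eq_left h]
    nlinarith [mul_nonneg (by linarith : (0:ℝ) ≤ 2 - (r₀ + r₁))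
      (by linarith : (0:ℝ) ≤ 2 * p - 1)]

/-- (Proposition 7.) Let `n = 2`, let `u` be the uniform (unitarily invariant Borel)
probability measure on the unit sphere of `ℂ²`, and let `p ∈ [0,1]` be arbitrary. Then
for every effect `E` on `ℂ²`, the set `S_E = {ψ : R_ψ(E) > max{p, 1-p}}` satisfies
`u(S_E) ≤ 1/2`. -/
theorem stmt_16
    [MeasurableSpace (Vn 2)] [BorelSpace (Vn 2)]
    (u : Measure (Metric.sphere (0 : Vn 2) 1)) [IsProbabilityMeasure u]
    (hinv : ∀ U : Vn 2 ≃ₗᵢ[ℂ] Vn 2, Measure.map (sphereMap U) u = u)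
    (p : ℝ) (hp : p ∈ Set.Icc (0 : ℝ) 1)
    (E : Vn 2 →L[ℂ] Vn 2) (hE : IsEffect E) :
    u {ψ : Metric.sphere (0 : Vn 2) 1 |
        max p (1 - p) < reliability p E (ψ : Vn 2)} ≤ 1 / 2 := by
  set U : Vn 2 ≃ₗᵢ[ℂ] Vn 2 :=
    swapPhase (lam ⟪basisVec 2 0, E (basisVec 2 1)⟫_ℂ) (norm_lam _) with hUdef
  set S : Set (Metric.sphere (0 : Vn 2) 1) :=
    {ψ | max p (1 - p) < reliability p E (ψ : Vn 2)} with hSdef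
  have hcont : Continuous fun ψ : Metric.sphere (0 : Vn 2) 1 =>
      reliability p E (ψ : Vn 2) := by
    unfold reliability
    have h1 : Continuous fun x : Vn 2 => (⟪x, diagOp E x⟫_ℂ).re :=
      Complex.continuous_re.comp (continuous_inner.comp
        (continuous_id.prodMk (diagOp E).continuous))
    have h2 : Continuous fun x : Vn 2 => (⟪x, (1 - E) x⟫_ℂ).re :=
      Complex.continuous_re.comp (continuous_inner.comp
        (continuous_id.prodMk (1 - E).continuous))
    exact ((continuous_const.mul (h1.comp continuous_subtype_val)).add
      (continuous_const.mul (h2.comp continuous_subtype_val)))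
  have hSmeas : MeasurableSet S := by
    have : S = (fun ψ : Metric.sphere (0 : Vn 2) 1 =>
        reliability p E (ψ : Vn 2)) ⁻¹' Set.Ioi (max p (1 - p)) := rfl
    rw [this]
    exact (isOpen_Ioi.preimage hcont).measurableSet
  have hmapcont : Continuous (sphereMap U) := by
    apply Continuous.subtype_mk
    exact U.continuous.comp continuous_subtype_val
  have hpre : u (sphereMap U ⁻¹' S) = u S := by
    conv_rhs => rw [← hinv U]
    rw [Measure.map_apply hmapcont.measurable hSmeas]
  have hdisj : Disjoint S (sphereMap U ⁻¹' S) := by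
    rw [Set.disjoint_left]
    rintro ψ h1 h2
    have h1' : max p (1 - p) < reliability p E (ψ : Vn 2) := h1
    have h2' : max p (1 - p) < reliability p E (U (ψ : Vn 2)) := h2
    have hψ : ‖(ψ : Vn 2)‖ = 1 := mem_sphere_zero_iff_norm.mp ψ.2
    have := key_ineq p hp E hE (ψ : Vn 2) hψ
    rw [← hUdef] at this
    linarith [this, h1', h2']
  have hsum : u S + u (sphereMap U ⁻¹' S) ≤ 1 := by
    rw [← measure_union hdisj (hmapcont.measurable hSmeas)]
    exact prob_le_one
  rw [hpre] at hsum
  rw [ENNReal.le_div_iff_mul_le (Or.inl two_ne_zero) (Or.inl ENNReal.ofNat_ne_top)]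
  rw [mul_comm, two_mul]
  exact hsum
end
end
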